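/- arXiv:1407.2563 — 5 statements merged into one kernel-verified Lean document; each statement's English description precedes it below -/
import Mathlib

section
/- Let z ∈ ℂ with 0 < |z| < 1 and Im z ≠ 0, and let w ∈ ℂ with w ≠ 0. Then the self-affine set E = { ∑_{n=0}^∞ aₙ zⁿ w : (aₙ) ∈ {0,1}^ℕ } ⊆ ℂ (the attractor of the iterated function system {x ↦ zx, x ↦ zx + w}, where multiplication by z = a + ib realizes the planar linear map with matrix [[a, b], [−b, a]]) is connected if and only if there exists f ∈ ℬ with f(z) = 0. -/
open Set Filter Topology

noncomputable section

/-- The function on `(-1,1)` defined by the power series with coefficient sequence `a`. -/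
def seriesFun (a : ℕ → ℝ) (x : ℝ) : ℝ := ∑' n, a n * x ^ n

/-- `a` is the coefficient sequence of a power series in the class `ℬ`:
constant term `1` and all other coefficients in `{-1, 0, 1}`. -/
def memB (a : ℕ → ℝ) : Prop :=
  a 0 = 1 ∧ ∀ n, 1 ≤ n → a n = -1 ∨ a n = 0 ∨ a n = 1

/-- `a` is the coefficient sequence of a power series in the class `ℬ_{[-1,1]}`:
constant term `1` and all other coefficients in `[-1, 1]`. -/
def memBI (a : ℕ → ℝ) : Prop :=
  a 0 = 1 ∧ ∀ n, 1 ≤ n → a n ∈ Set.Icc (-1 : ℝ) 1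

/-- `F` has at least `k` zeros in `(0, t]`, counted with multiplicity
(multiplicity = order of vanishing). -/
def hasZeros (F : ℝ → ℝ) (k : ℕ) (t : ℝ) : Prop :=
  ∃ (s : Finset ℝ) (d : ℝ → ℕ),
    (∀ x ∈ s, x ∈ Set.Ioc (0 : ℝ) t ∧ 1 ≤ d x ∧ ∀ j < d x, iteratedDeriv j F x = 0) ∧
    k ≤ ∑ x ∈ s, d x

/-- `ξ_k(F)`: the `k`-th zero of `F` in `(0,1)` counted with multiplicity,
with the convention `ξ_k(F) = 1` if there are fewer than `k` such zeros. -/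
def xi (k : ℕ) (F : ℝ → ℝ) : ℝ :=
  sInf (insert 1 {t | t ∈ Set.Ioo (0 : ℝ) 1 ∧ hasZeros F k t})

/-- `α₂`: the smallest double zero in `(0,1)` of a power series in `ℬ_{[-1,1]}`. -/
def alpha2 : ℝ :=
  sInf {x | x ∈ Set.Ioo (0 : ℝ) 1 ∧
    ∃ a, memBI a ∧ seriesFun a x = 0 ∧ deriv (seriesFun a) x = 0}

/-- `α₃`: the smallest triple zero in `(0,1)` of a power series in `ℬ_{[-1,1]}`. -/
def alpha3 : ℝ :=
  sInf {x | x ∈ Set.Ioo (0 : ℝ) 1 ∧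
    ∃ a, memBI a ∧ seriesFun a x = 0 ∧ deriv (seriesFun a) x = 0 ∧
      iteratedDeriv 2 (seriesFun a) x = 0}

/-- The set of values `ξ₂(f)` over `f ∈ ℬ_{[-1,1]}` with `f(γ) = 0`. -/
def phiSet (γ : ℝ) : Set ℝ :=
  {y | ∃ a, memBI a ∧ seriesFun a γ = 0 ∧ y = xi 2 (seriesFun a)}

/-- `φ(γ) = min { ξ₂(f) : f ∈ ℬ_{[-1,1]}, f(γ) = 0 }`. -/
def phi (γ : ℝ) : ℝ := sInf (phiSet γ)

/-- The set of values `ξ₃(f)` over `f ∈ ℬ_{[-1,1]}` with `f(γ) = 0`. -/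
def psiSet (γ : ℝ) : Set ℝ :=
  {y | ∃ a, memBI a ∧ seriesFun a γ = 0 ∧ y = xi 3 (seriesFun a)}

/-- `ψ(γ) = min { ξ₃(f) : f ∈ ℬ_{[-1,1]}, f(γ) = 0 }`. -/
def psi (γ : ℝ) : ℝ := sInf (psiSet γ)

/-- The `(*)`-function `h_k^{(a)}(x) = 1 - x - ⋯ - x^(k-1) + a x^k + x^(k+1)/(1-x)`. -/
def hstar (k : ℕ) (a : ℝ) (x : ℝ) : ℝ :=
  1 - ∑ i ∈ Finset.Ico 1 k, x ^ i + a * x ^ k + x ^ (k + 1) / (1 - x)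

/-- The `(**)`-function
`H_{k,ℓ}^{(a,b)}(x) = 1 - ∑_{i=1}^{k-1} x^i + a x^k + ∑_{i=k+1}^{ℓ-1} x^i + b x^ℓ - x^(ℓ+1)/(1-x)`. -/
def Hstar (k l : ℕ) (a b : ℝ) (x : ℝ) : ℝ :=
  1 - ∑ i ∈ Finset.Ico 1 k, x ^ i + a * x ^ k + ∑ i ∈ Finset.Ico (k + 1) l, x ^ i +
    b * x ^ l - x ^ (l + 1) / (1 - x)

/-- The set `𝒩₊`. -/
def Nplus : Set (ℝ × ℝ) :=
  {p | 0 < p.1 ∧ p.1 < p.2 ∧ p.2 < 1 ∧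
    ∃ a, memB a ∧ seriesFun a p.1 = 0 ∧ seriesFun a p.2 = 0}

/-- The set `𝒩̃₊`. -/
def NtildePlus : Set (ℝ × ℝ) :=
  {p | p ∈ Nplus ∧ ∃ a, memB a ∧ seriesFun a p.1 = 0 ∧ seriesFun a p.2 = 0 ∧
    hasZeros (seriesFun a) 3 p.2}

/-- The "trivial" part `𝒩_t` of the connectedness locus. -/
def Nt : Set (ℝ × ℝ) :=
  {p | p.1 ∈ Set.Ioo (-1 : ℝ) 1 ∧ p.2 ∈ Set.Ioo (-1 : ℝ) 1 ∧ 1 / 2 ≤ |p.1 * p.2|}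

/-- The region `Δ`. -/
def Delta : Set (ℝ × ℝ) :=
  {p | p.1 ∈ Set.Ioo (0 : ℝ) 1 ∧ p.2 ∈ Set.Ioo (0 : ℝ) 1 ∧ p.1 < p.2 ∧ p.1 * p.2 < 1 / 2}

namespace Stmt0Proof

/-- The sum of the power series with coefficients `a`, evaluated at `z`, times `w`. -/
def P (z w : ℂ) (a : ℕ → ℝ) : ℂ := ∑' n, (a n : ℂ) * z ^ n * w

/-- Sequences with values in `{0,1}`. -/
def S01 : Set (ℕ → ℝ) := {a | ∀ n, a n = 0 ∨ a n = 1}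

/-- The attractor. -/
def Eset (z w : ℂ) : Set ℂ := {p | ∃ a, a ∈ S01 ∧ p = P z w a}

lemma abs_le_one_of_S01 {a : ℕ → ℝ} (ha : a ∈ S01) (n : ℕ) : |a n| ≤ 1 := by
  rcases ha n with h | h <;> simp [h]

lemma norm_term (z w : ℂ) (a : ℕ → ℝ) (n : ℕ) :
    ‖(a n : ℂ) * z ^ n * w‖ = |a n| * (‖z‖ ^ n * ‖w‖) := by
  simp [norm_mul, norm_pow, Complex.norm_real, Real.norm_eq_abs, mul_assoc]

lemma summable_geom (z w : ℂ) (hz1 : ‖z‖ < 1) :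
    Summable (fun n => ‖z‖ ^ n * ‖w‖) :=
  (summable_geometric_of_lt_one (norm_nonneg z) hz1).mul_right _

lemma term_le (z w : ℂ) {a : ℕ → ℝ} (ha : ∀ n, |a n| ≤ 1) (n : ℕ) :
    ‖(a n : ℂ) * z ^ n * w‖ ≤ ‖z‖ ^ n * ‖w‖ := by
  rw [norm_term]
  calc |a n| * (‖z‖ ^ n * ‖w‖) ≤ 1 * (‖z‖ ^ n * ‖w‖) :=
        mul_le_mul_of_nonneg_right (ha n) (by positivity)
    _ = ‖z‖ ^ n * ‖w‖ := one_mul _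

lemma summable_P (z w : ℂ) (hz1 : ‖z‖ < 1) {a : ℕ → ℝ} (ha : ∀ n, |a n| ≤ 1) :
    Summable (fun n => (a n : ℂ) * z ^ n * w) :=
  Summable.of_norm_bounded (summable_geom z w hz1) (term_le z w ha)

lemma summable_coeff (z : ℂ) (hz1 : ‖z‖ < 1) {a : ℕ → ℝ} (ha : ∀ n, |a n| ≤ 1) :
    Summable (fun n => (a n : ℂ) * z ^ n) := by
  refine Summable.of_norm_bounded (summable_geometric_of_lt_one (norm_nonneg z) hz1) fun n => ?_
  calc ‖(a n : ℂ) * z ^ n‖ = |a n| * ‖z‖ ^ n := by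
        simp [norm_mul, norm_pow, Complex.norm_real, Real.norm_eq_abs]
    _ ≤ 1 * ‖z‖ ^ n := mul_le_mul_of_nonneg_right (ha n) (by positivity)
    _ = ‖z‖ ^ n := one_mul _

lemma P_eq_tsum_mul (z w : ℂ) (a : ℕ → ℝ) : P z w a = (∑' n, (a n : ℂ) * z ^ n) * w := by
  rw [P, ← tsum_mul_right]

lemma norm_P_le (z w : ℂ) (hz1 : ‖z‖ < 1) {a : ℕ → ℝ} (ha : ∀ n, |a n| ≤ 1) :
    ‖P z w a‖ ≤ ‖w‖ / (1 - ‖z‖) := by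
  have hs : Summable fun n => ‖(a n : ℂ) * z ^ n * w‖ :=
    Summable.of_nonneg_of_le (fun n => norm_nonneg _) (term_le z w ha) (summable_geom z w hz1)
  calc ‖P z w a‖ ≤ ∑' n, ‖(a n : ℂ) * z ^ n * w‖ := norm_tsum_le_tsum_norm hs
    _ ≤ ∑' n, ‖z‖ ^ n * ‖w‖ := Summable.tsum_le_tsum (term_le z w ha) hs (summable_geom z w hz1)
    _ = (∑' n, ‖z‖ ^ n) * ‖w‖ := tsum_mul_right
    _ = (1 - ‖z‖)⁻¹ * ‖w‖ := by rw [tsum_geometric_of_lt_one (norm_nonneg z) hz1]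
    _ = ‖w‖ / (1 - ‖z‖) := by rw [div_eq_mul_inv, mul_comm]

/-- Shift decomposition. -/
lemma P_shift (z w : ℂ) (hz1 : ‖z‖ < 1) {a : ℕ → ℝ} (ha : ∀ n, |a n| ≤ 1) :
    P z w a = (a 0 : ℂ) * w + z * P z w (fun n => a (n + 1)) := by
  have hsum := summable_P z w hz1 ha
  have h0 : P z w a = (a 0 : ℂ) * z ^ 0 * w + ∑' n, (a (n + 1) : ℂ) * z ^ (n + 1) * w :=
    Summable.tsum_eq_zero_add hsum
  rw [h0]
  congr 1
  · ring
  · rw [show (fun n => (a (n + 1) : ℂ) * z ^ (n + 1) * w)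
        = fun n => z * ((a (n + 1) : ℂ) * z ^ n * w) by funext n; ring]
    rw [tsum_mul_left]
    rfl

/-- Prepending a coefficient. -/
lemma P_cons (z w : ℂ) (hz1 : ‖z‖ < 1) (u : ℝ) {a : ℕ → ℝ} (ha : ∀ n, |a n| ≤ 1)
    (hu : |u| ≤ 1) :
    P z w (fun n => Nat.casesOn n u (fun k => a k)) = (u : ℂ) * w + z * P z w a := by
  have ha' : ∀ n, |(fun n => Nat.casesOn n u (fun k => a k) : ℕ → ℝ) n| ≤ 1 := by
    intro n; cases n with
    | zero => exact hu
    | succ k => exact ha k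
  have := P_shift z w hz1 ha'
  simpa using this

lemma isCompact_S01 : IsCompact S01 := by
  have : S01 = Set.pi Set.univ (fun _ : ℕ => ({0, 1} : Set ℝ)) := by
    ext a; simp [S01, Set.mem_pi]
  rw [this]
  exact isCompact_univ_pi fun _ => (Set.toFinite _).isCompact

lemma continuousOn_P (z w : ℂ) (hz1 : ‖z‖ < 1) :
    ContinuousOn (P z w) {a : ℕ → ℝ | ∀ n, |a n| ≤ 1} := by
  refine continuousOn_tsum (fun n => ?_)
    ((summable_geometric_of_lt_one (norm_nonneg z) hz1).mul_right ‖w‖) ?_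
  · exact (((Complex.continuous_ofReal.comp (continuous_apply n)).mul continuous_const).mul
      continuous_const).continuousOn
  · intro n a ha
    simpa [norm_mul, norm_pow, Complex.norm_real, Real.norm_eq_abs, mul_assoc] using
      mul_le_mul_of_nonneg_right (ha n) (by positivity : (0:ℝ) ≤ ‖z‖ ^ n * ‖w‖)

/-- Nested intersections of compact connected sets are connected. -/
lemma isPreconnected_iInter_nested (K : ℕ → Set ℂ) (hcomp : ∀ n, IsCompact (K n))
    (hconn : ∀ n, IsPreconnected (K n)) (hanti : ∀ n, K (n + 1) ⊆ K n) :
    IsPreconnected (⋂ n, K n) := by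
  set C := ⋂ n, K n with hC
  have hanti' : Antitone K := antitone_nat_of_succ_le hanti
  by_contra hnc
  rw [IsPreconnected] at hnc
  push_neg at hnc
  obtain ⟨U, V, hUo, hVo, hCUV, hCU, hCV, hCe⟩ := hnc
  have hCcl : IsClosed C := isClosed_iInter fun n => (hcomp n).isClosed
  have hCcomp : IsCompact C := (hcomp 0).of_isClosed_subset hCcl (iInter_subset K 0)
  have hdisj : Disjoint (C \ V) (C \ U) := by
    rw [Set.disjoint_left]
    rintro x ⟨hxC, hxV⟩ ⟨-, hxU⟩
    rcases hCUV hxC with h | h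
    · exact hxU h
    · exact hxV h
  obtain ⟨U', V', hU'o, hV'o, h1U', h2V', hd'⟩ :=
    SeparatedNhds.of_isCompact_isCompact (hCcomp.diff hVo) (hCcomp.diff hUo) hdisj
  have h12 : C ⊆ (C \ V) ∪ (C \ U) := by
    intro x hx
    by_cases hxU : x ∈ U
    · left
      refine ⟨hx, fun hxV => ?_⟩
      have : x ∈ C ∩ (U ∩ V) := ⟨hx, hxU, hxV⟩
      simp [hCe] at this
    · right; exact ⟨hx, hxU⟩
  have hCW : C ⊆ U' ∪ V' := fun x hx => (union_subset_union h1U' h2V') (h12 hx)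
  have hex : ∃ n, K n ⊆ U' ∪ V' := by
    by_contra h
    push_neg at h
    have hne : ∀ n, (K n \ (U' ∪ V')).Nonempty := by
      intro n
      obtain ⟨x, hx1, hx2⟩ := Set.not_subset.mp (h n)
      exact ⟨x, hx1, hx2⟩
    have hdir : Directed (· ⊇ ·) (fun n => K n \ (U' ∪ V')) := by
      have : Antitone (fun n => K n \ (U' ∪ V')) :=
        fun m n hmn => Set.diff_subset_diff_left (hanti' hmn)
      exact this.directed_ge
    have hmem := IsCompact.nonempty_iInter_of_directed_nonempty_isCompact_isClosed
      (fun n => K n \ (U' ∪ V')) hdir hne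
      (fun n => (hcomp n).diff (hU'o.union hV'o))
      (fun n => (hcomp n).isClosed.sdiff (hU'o.union hV'o))
    obtain ⟨x, hx⟩ := hmem
    simp only [Set.mem_iInter, Set.mem_diff] at hx
    have hxC : x ∈ C := Set.mem_iInter.mpr fun n => (hx n).1
    exact (hx 0).2 (hCW hxC)
  obtain ⟨n, hn⟩ := hex
  have h1ne : (K n ∩ U').Nonempty := by
    obtain ⟨x, hxC, hxU⟩ := hCU
    have hx1 : x ∈ C \ V := by
      refine ⟨hxC, fun hxV => ?_⟩
      have : x ∈ C ∩ (U ∩ V) := ⟨hxC, hxU, hxV⟩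
      simp [hCe] at this
    exact ⟨x, Set.mem_iInter.mp hxC n, h1U' hx1⟩
  have h2ne : (K n ∩ V').Nonempty := by
    obtain ⟨x, hxC, hxV⟩ := hCV
    have hx2 : x ∈ C \ U := by
      refine ⟨hxC, fun hxU => ?_⟩
      have : x ∈ C ∩ (U ∩ V) := ⟨hxC, hxU, hxV⟩
      simp [hCe] at this
    exact ⟨x, Set.mem_iInter.mp hxC n, h2V' hx2⟩
  obtain ⟨x, -, hxU', hxV'⟩ := hconn n U' V' hU'o hV'o hn h1ne h2ne
  exact Set.disjoint_left.mp hd' hxU' hxV'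

end Stmt0Proof

/-- For `z ∈ ℂ` with `0 < |z| < 1`, `Im z ≠ 0`, and `w ≠ 0`, the attractor
`E = { ∑ aₙ zⁿ w : aₙ ∈ {0,1} }` is connected iff some `f ∈ ℬ` vanishes at `z`. -/
theorem stmt0 (z : ℂ) (hz0 : 0 < ‖z‖) (hz1 : ‖z‖ < 1)
    (him : z.im ≠ 0) (w : ℂ) (hw : w ≠ 0) :
    IsConnected {p : ℂ | ∃ a : ℕ → ℝ, (∀ n, a n = 0 ∨ a n = 1) ∧
        p = ∑' n, (a n : ℂ) * z ^ n * w} ↔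
      ∃ b : ℕ → ℝ, memB b ∧ ∑' n, (b n : ℂ) * z ^ n = 0 := by
  clear hz0 him
  open Stmt0Proof in
  have hz1' : ‖z‖ < 1 := by exact hz1
  have hseteq : {p : ℂ | ∃ a : ℕ → ℝ, (∀ n, a n = 0 ∨ a n = 1) ∧
      p = ∑' n, (a n : ℂ) * z ^ n * w} = Stmt0Proof.Eset z w := rfl
  rw [hseteq]
  set E := Stmt0Proof.Eset z w with hE
  -- basic facts about E
  have hzero : (0 : ℂ) ∈ E := by
    refine ⟨fun _ => 0, fun n => Or.inl rfl, ?_⟩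
    simp [Stmt0Proof.P]
  have hsub01 : Stmt0Proof.S01 ⊆ {a : ℕ → ℝ | ∀ n, |a n| ≤ 1} :=
    fun a ha n => Stmt0Proof.abs_le_one_of_S01 ha n
  have hEcomp : IsCompact E := by
    have : E = Stmt0Proof.P z w '' Stmt0Proof.S01 := by
      ext p
      simp only [hE, Stmt0Proof.Eset, Set.mem_setOf_eq, Set.mem_image]
      constructor
      · rintro ⟨a, ha, rfl⟩; exact ⟨a, ha, rfl⟩
      · rintro ⟨a, ha, rfl⟩; exact ⟨a, ha, rfl⟩
    rw [this]
    exact Stmt0Proof.isCompact_S01.image_of_continuousOn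
      ((Stmt0Proof.continuousOn_P z w hz1').mono hsub01)
  -- self-maps of E
  have hmulE : ∀ p ∈ E, z * p ∈ E := by
    rintro p ⟨a, ha, rfl⟩
    refine ⟨fun n => Nat.casesOn n 0 (fun k => a k), ?_, ?_⟩
    · intro n; cases n with
      | zero => exact Or.inl rfl
      | succ k => exact ha k
    · rw [Stmt0Proof.P_cons z w hz1' 0 (hsub01 ha) (by simp)]
      simp
  have hmulwE : ∀ p ∈ E, z * p + w ∈ E := by
    rintro p ⟨a, ha, rfl⟩
    refine ⟨fun n => Nat.casesOn n 1 (fun k => a k), ?_, ?_⟩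
    · intro n; cases n with
      | zero => exact Or.inr rfl
      | succ k => exact ha k
    · rw [Stmt0Proof.P_cons z w hz1' 1 (hsub01 ha) (by simp)]
      push_cast; ring
  constructor
  · -- connected → series
    intro hconnE
    set A := Stmt0Proof.P z w '' (Stmt0Proof.S01 ∩ {a | a 0 = 0}) with hA
    set B := Stmt0Proof.P z w '' (Stmt0Proof.S01 ∩ {a | a 0 = 1}) with hB
    have hclosed0 : IsClosed {a : ℕ → ℝ | a 0 = 0} :=
      isClosed_eq (continuous_apply 0) continuous_const
    have hclosed1 : IsClosed {a : ℕ → ℝ | a 0 = 1} :=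
      isClosed_eq (continuous_apply 0) continuous_const
    have hAcomp : IsCompact A :=
      (Stmt0Proof.isCompact_S01.inter_right hclosed0).image_of_continuousOn
        ((Stmt0Proof.continuousOn_P z w hz1').mono
          (fun a ha => hsub01 ha.1))
    have hBcomp : IsCompact B :=
      (Stmt0Proof.isCompact_S01.inter_right hclosed1).image_of_continuousOn
        ((Stmt0Proof.continuousOn_P z w hz1').mono
          (fun a ha => hsub01 ha.1))
    have hAE : A ⊆ E := by
      rintro p ⟨a, ⟨ha, -⟩, rfl⟩; exact ⟨a, ha, rfl⟩
    have hBE : B ⊆ E := by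
      rintro p ⟨a, ⟨ha, -⟩, rfl⟩; exact ⟨a, ha, rfl⟩
    have hcover : E ⊆ A ∪ B := by
      rintro p ⟨a, ha, rfl⟩
      rcases ha 0 with h0 | h0
      · exact Or.inl ⟨a, ⟨ha, h0⟩, rfl⟩
      · exact Or.inr ⟨a, ⟨ha, h0⟩, rfl⟩
    have hAne : A.Nonempty :=
      ⟨_, ⟨fun _ => 0, ⟨fun n => Or.inl rfl, rfl⟩, rfl⟩⟩
    have hBne : B.Nonempty :=
      ⟨_, ⟨fun n => if n = 0 then 1 else 0, ⟨fun n => by by_cases h : n = 0 <;> simp [h],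
        by simp⟩, rfl⟩⟩
    have hABne : (A ∩ B).Nonempty := by
      by_contra hAB
      rw [Set.not_nonempty_iff_eq_empty] at hAB
      obtain ⟨U, V, hUo, hVo, hAU, hBV, hUV⟩ :=
        SeparatedNhds.of_isCompact_isCompact hAcomp hBcomp
          (Set.disjoint_iff_inter_eq_empty.mpr hAB)
      have hEU : (E ∩ U).Nonempty := by
        obtain ⟨x, hx⟩ := hAne; exact ⟨x, hAE hx, hAU hx⟩
      have hEV : (E ∩ V).Nonempty := by
        obtain ⟨x, hx⟩ := hBne; exact ⟨x, hBE hx, hBV hx⟩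
      obtain ⟨x, -, hxU, hxV⟩ := hconnE.isPreconnected U V hUo hVo
        (fun p hp => (Set.union_subset_union hAU hBV) (hcover hp)) hEU hEV
      exact Set.disjoint_left.mp hUV hxU hxV
    obtain ⟨q, ⟨a, ⟨haS, ha0⟩, hqa⟩, ⟨b, ⟨hbS, hb0⟩, hqb⟩⟩ := hABne
    have ha0' : a 0 = 0 := ha0
    have hb0' : b 0 = 1 := hb0
    refine ⟨fun n => b n - a n, ⟨by simp [hb0', ha0'], ?_⟩, ?_⟩
    · intro n _
      rcases haS n with h | h <;> rcases hbS n with h' | h' <;> simp [h, h']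
    · have hga : Summable (fun n => (a n : ℂ) * z ^ n) :=
        Stmt0Proof.summable_coeff z hz1' (hsub01 haS)
      have hgb : Summable (fun n => (b n : ℂ) * z ^ n) :=
        Stmt0Proof.summable_coeff z hz1' (hsub01 hbS)
      have heq : (∑' n, (a n : ℂ) * z ^ n) = ∑' n, (b n : ℂ) * z ^ n := by
        have h1 : (∑' n, (a n : ℂ) * z ^ n) * w = (∑' n, (b n : ℂ) * z ^ n) * w := by
          rw [← Stmt0Proof.P_eq_tsum_mul, ← Stmt0Proof.P_eq_tsum_mul, hqa, hqb]
        exact mul_right_cancel₀ hw h1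
      have := Summable.tsum_sub hgb hga
      rw [← heq, sub_self] at this
      rw [show (fun n => ((b n - a n : ℝ) : ℂ) * z ^ n)
          = fun n => (b n : ℂ) * z ^ n - (a n : ℂ) * z ^ n by
        funext n; push_cast; ring]
      exact this
  · -- series → connected
    rintro ⟨b, ⟨hb0, hb1⟩, hbz⟩
    have habs_b : ∀ n, |b n| ≤ 1 := by
      intro n
      cases n with
      | zero => simp [hb0]
      | succ k =>
        rcases hb1 (k + 1) (Nat.succ_le_succ (Nat.zero_le k)) with h | h | h <;> simp [h]
    -- split b = u - v
    set u : ℕ → ℝ := fun n => if n = 0 then 1 else if b n = 1 then 1 else 0 with hu_def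
    set v : ℕ → ℝ := fun n => if n = 0 then 0 else if b n = -1 then 1 else 0 with hv_def
    have huS : u ∈ Stmt0Proof.S01 := by
      intro n; by_cases h : n = 0
      · simp [hu_def, h]
      · by_cases h' : b n = 1 <;> simp [hu_def, h, h']
    have hvS : v ∈ Stmt0Proof.S01 := by
      intro n; by_cases h : n = 0
      · simp [hv_def, h]
      · by_cases h' : b n = -1 <;> simp [hv_def, h, h']
    have hsplit : ∀ n, u n - v n = b n := by
      intro n
      cases n with
      | zero => simp [hu_def, hv_def, hb0]
      | succ k =>
        rcases hb1 (k + 1) (Nat.succ_le_succ (Nat.zero_le k)) with h | h | h <;>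
          norm_num [hu_def, hv_def, h]
    -- q = P u = P v
    have hqeq : Stmt0Proof.P z w u = Stmt0Proof.P z w v := by
      have hgu : Summable (fun n => (u n : ℂ) * z ^ n) :=
        Stmt0Proof.summable_coeff z hz1' (hsub01 huS)
      have hgv : Summable (fun n => (v n : ℂ) * z ^ n) :=
        Stmt0Proof.summable_coeff z hz1' (hsub01 hvS)
      have h1 : (∑' n, (u n : ℂ) * z ^ n) - (∑' n, (v n : ℂ) * z ^ n) = 0 := by
        rw [← Summable.tsum_sub hgu hgv, ← hbz]
        congr 1; funext n
        rw [← hsplit n]; push_cast; ring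
      rw [Stmt0Proof.P_eq_tsum_mul, Stmt0Proof.P_eq_tsum_mul, sub_eq_zero.mp h1]
    set q := Stmt0Proof.P z w u with hq_def
    -- q belongs to both halves
    have hqB : ∀ X : Set ℂ, E ⊆ X → q ∈ (fun p => z * p + w) '' X := by
      intro X hEX
      have h := Stmt0Proof.P_shift z w hz1' (hsub01 huS)
      have hu0 : u 0 = 1 := by simp [hu_def]
      refine ⟨Stmt0Proof.P z w (fun n => u (n + 1)), hEX ⟨_, fun n => huS (n + 1), rfl⟩, ?_⟩
      show z * Stmt0Proof.P z w (fun n => u (n + 1)) + w = q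
      rw [hq_def, h, hu0]; push_cast; ring
    have hqA : ∀ X : Set ℂ, E ⊆ X → q ∈ (fun p => z * p) '' X := by
      intro X hEX
      have h := Stmt0Proof.P_shift z w hz1' (hsub01 hvS)
      have hv0 : v 0 = 0 := by simp [hv_def]
      have hqeq2 : Stmt0Proof.P z w u = Stmt0Proof.P z w v := hqeq
      refine ⟨Stmt0Proof.P z w (fun n => v (n + 1)), hEX ⟨_, fun n => hvS (n + 1), rfl⟩, ?_⟩
      show z * Stmt0Proof.P z w (fun n => v (n + 1)) = q
      rw [hq_def, hqeq2, h, hv0]; push_cast; ring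
    -- the iteration
    set R := ‖w‖ / (1 - ‖z‖) with hR_def
    have hz1pos : 0 < 1 - ‖z‖ := by linarith
    have hR0 : 0 < R := div_pos (norm_pos_iff.mpr hw) hz1pos
    have hRfix : ‖z‖ * R + ‖w‖ = R := by
      have h := div_mul_cancel₀ ‖w‖ (ne_of_gt hz1pos)
      rw [hR_def]; nlinarith [h]
    set F : Set ℂ → Set ℂ := fun X => (fun p => z * p) '' X ∪ (fun p => z * p + w) '' X
      with hF_def
    set K : ℕ → Set ℂ := fun n => F^[n] (Metric.closedBall 0 R) with hK_def
    have hK0 : K 0 = Metric.closedBall 0 R := rfl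
    have hKsucc : ∀ n, K (n + 1) = F (K n) := by
      intro n; rw [hK_def]; exact Function.iterate_succ_apply' F n _
    have hFmono : ∀ X Y : Set ℂ, X ⊆ Y → F X ⊆ F Y := fun X Y h =>
      Set.union_subset_union (Set.image_mono h) (Set.image_mono h)
    have hEF : E ⊆ F E := by
      rintro p ⟨a, ha, rfl⟩
      have h := Stmt0Proof.P_shift z w hz1' (hsub01 ha)
      rcases ha 0 with h0 | h0
      · left
        exact ⟨Stmt0Proof.P z w (fun n => a (n + 1)), ⟨_, fun n => ha (n + 1), rfl⟩,
          by rw [h, h0]; push_cast; ring⟩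
      · right
        exact ⟨Stmt0Proof.P z w (fun n => a (n + 1)), ⟨_, fun n => ha (n + 1), rfl⟩,
          by rw [h, h0]; push_cast; ring⟩
    have hEK : ∀ n, E ⊆ K n := by
      intro n
      induction n with
      | zero =>
        rintro p hp
        rw [hK0, Metric.mem_closedBall, dist_zero_right]
        obtain ⟨a, ha, rfl⟩ := hp
        exact Stmt0Proof.norm_P_le z w hz1' (hsub01 ha)
      | succ n ih =>
        rw [hKsucc]
        exact fun p hp => hFmono E (K n) ih (hEF hp)
    have hK1 : K 1 ⊆ K 0 := by
      rw [hKsucc, hK0]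
      rintro x (⟨p, hp, rfl⟩ | ⟨p, hp, rfl⟩) <;>
        rw [Metric.mem_closedBall, dist_zero_right] at hp ⊢
      · calc ‖z * p‖ = ‖z‖ * ‖p‖ := norm_mul z p
          _ ≤ ‖z‖ * R := mul_le_mul_of_nonneg_left hp (norm_nonneg z)
          _ ≤ ‖z‖ * R + ‖w‖ := le_add_of_nonneg_right (norm_nonneg w)
          _ = R := hRfix
      · calc ‖z * p + w‖ ≤ ‖z * p‖ + ‖w‖ := norm_add_le _ _
          _ = ‖z‖ * ‖p‖ + ‖w‖ := by rw [norm_mul]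
          _ ≤ ‖z‖ * R + ‖w‖ := by
            have := mul_le_mul_of_nonneg_left hp (norm_nonneg z); linarith
          _ = R := hRfix
    have hKanti : ∀ n, K (n + 1) ⊆ K n := by
      intro n
      induction n with
      | zero => exact hK1
      | succ n ih =>
        have h2 := hFmono _ _ ih
        rwa [← hKsucc (n + 1), ← hKsucc n] at h2
    have hKcomp : ∀ n, IsCompact (K n) := by
      intro n
      induction n with
      | zero => exact isCompact_closedBall 0 R
      | succ n ih =>
        rw [hKsucc]
        exact (ih.image (continuous_mul_left z)).union
          (ih.image ((continuous_mul_left z).add continuous_const))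
    have hKconn : ∀ n, IsPreconnected (K n) := by
      intro n
      induction n with
      | zero => exact (convex_closedBall (0 : ℂ) R).isPreconnected
      | succ n ih =>
        rw [hKsucc]
        exact IsPreconnected.union q (hqA (K n) (hEK n)) (hqB (K n) (hEK n))
          (ih.image _ (continuous_mul_left z).continuousOn)
          (ih.image _ ((continuous_mul_left z).add continuous_const).continuousOn)
    have happrox : ∀ n, ∀ x ∈ K n, ∃ p ∈ E, dist x p ≤ ‖z‖ ^ n * R := by
      intro n
      induction n with
      | zero =>
        intro x hx
        rw [hK0, Metric.mem_closedBall] at hx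
        exact ⟨0, hzero, by simpa using hx⟩
      | succ n ih =>
        intro x hx
        rw [hKsucc] at hx
        rcases hx with ⟨y, hy, rfl⟩ | ⟨y, hy, rfl⟩
        · obtain ⟨p, hp, hd⟩ := ih y hy
          refine ⟨z * p, hmulE p hp, ?_⟩
          calc dist (z * y) (z * p) = ‖z‖ * dist y p := by
                rw [dist_eq_norm, dist_eq_norm, ← mul_sub, norm_mul]
            _ ≤ ‖z‖ * (‖z‖ ^ n * R) := mul_le_mul_of_nonneg_left hd (norm_nonneg z)
            _ = ‖z‖ ^ (n + 1) * R := by ring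
        · obtain ⟨p, hp, hd⟩ := ih y hy
          refine ⟨z * p + w, hmulwE p hp, ?_⟩
          calc dist (z * y + w) (z * p + w) = ‖z‖ * dist y p := by
                rw [dist_eq_norm, dist_eq_norm, add_sub_add_right_eq_sub, ← mul_sub, norm_mul]
            _ ≤ ‖z‖ * (‖z‖ ^ n * R) := mul_le_mul_of_nonneg_left hd (norm_nonneg z)
            _ = ‖z‖ ^ (n + 1) * R := by ring
    have hinter : (⋂ n, K n) = E := by
      apply Set.Subset.antisymm
      · intro x hx
        rw [← hEcomp.isClosed.closure_eq]
        rw [Metric.mem_closure_iff]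
        intro ε hε
        obtain ⟨n, hn⟩ : ∃ n, ‖z‖ ^ n * R < ε := by
          obtain ⟨n, hn⟩ := exists_pow_lt_of_lt_one (div_pos hε hR0) hz1'
          exact ⟨n, by rwa [← lt_div_iff₀ hR0]⟩
        obtain ⟨p, hp, hd⟩ := happrox n x (Set.mem_iInter.mp hx n)
        exact ⟨p, hp, lt_of_le_of_lt hd hn⟩
      · exact Set.subset_iInter hEK
    rw [← hinter]
    exact ⟨⟨0, hinter.symm ▸ hzero⟩,
      Stmt0Proof.isPreconnected_iInter_nested K hKcomp hKconn hKanti⟩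
end
end

section
/- Let γ, λ ∈ (−1,1) with γ ≠ λ, and let b₁, b₂ ∈ ℝ with b₁ ≠ 0 and b₂ ≠ 0. Then the self-affine set E = { ( ∑_{n=0}^∞ aₙ γⁿ b₁ , ∑_{n=0}^∞ aₙ λⁿ b₂ ) : (aₙ) ∈ {0,1}^ℕ } ⊆ ℝ² (the attractor of the iterated function system {Tx, Tx + (b₁,b₂)} with T = diag(γ, λ)) is connected if and only if there exists f ∈ ℬ with f(γ) = f(λ) = 0. -/
open Set Filter Topology

noncomputable section

namespace Stmt1Aux

open Relation

/-! ### Chains -/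

def Chain (E : Set (ℝ × ℝ)) (ε : ℝ) : ℝ × ℝ → ℝ × ℝ → Prop :=
  Relation.ReflTransGen (fun p q => q ∈ E ∧ dist p q ≤ ε)

lemma Chain.mono_set {S E : Set (ℝ × ℝ)} (hSE : S ⊆ E) {ε : ℝ} {x y : ℝ × ℝ}
    (h : Chain S ε x y) : Chain E ε x y :=
  ReflTransGen.mono (p := fun p q => q ∈ E ∧ dist p q ≤ ε) (fun _ _ hr => ⟨hSE hr.1, hr.2⟩) x y h

lemma Chain.mono_eps {E : Set (ℝ × ℝ)} {ε ε' : ℝ} (hε : ε ≤ ε') {x y : ℝ × ℝ}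
    (h : Chain E ε x y) : Chain E ε' x y :=
  ReflTransGen.mono (p := fun p q => q ∈ E ∧ dist p q ≤ ε') (fun _ _ hr => ⟨hr.1, hr.2.trans hε⟩) x y h

lemma Chain.map {E : Set (ℝ × ℝ)} {f : ℝ × ℝ → ℝ × ℝ} {ρ ε : ℝ} (hρ : 0 ≤ ρ)
    (hf : ∀ u v, dist (f u) (f v) ≤ ρ * dist u v) {x y : ℝ × ℝ} (h : Chain E ε x y) :
    Chain (f '' E) (ρ * ε) (f x) (f y) := by
  induction h with
  | refl => exact ReflTransGen.refl
  | tail _ hr ih => exact ReflTransGen.tail ih ⟨Set.mem_image_of_mem f hr.1,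
      (hf _ _).trans (mul_le_mul_of_nonneg_left hr.2 hρ)⟩

lemma Chain.mem_of_mem {E : Set (ℝ × ℝ)} {ε : ℝ} {x y : ℝ × ℝ} (hx : x ∈ E)
    (h : Chain E ε x y) : y ∈ E := by
  induction h with
  | refl => exact hx
  | tail _ hr _ => exact hr.1

lemma Chain.cross {E U V : Set (ℝ × ℝ)} {ε : ℝ} {x y : ℝ × ℝ}
    (hEU : E ⊆ U ∪ V) (hdisj : E ∩ (U ∩ V) = ∅)
    (hx : x ∈ E) (hxU : x ∈ U) (h : Chain E ε x y) :
    y ∈ V → ∃ p ∈ E ∩ U, ∃ q ∈ E ∩ V, dist p q ≤ ε := by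
  induction h with
  | refl =>
      intro hxV
      exact absurd (show x ∈ E ∩ (U ∩ V) from ⟨hx, hxU, hxV⟩) (by simp [hdisj])
  | @tail b c hxb hr ih =>
      intro hcV
      have hbE : b ∈ E := Chain.mem_of_mem hx hxb
      rcases hEU hbE with hbU | hbV
      · exact ⟨b, ⟨hbE, hbU⟩, c, ⟨hr.1, hcV⟩, hr.2⟩
      · exact ih hbV

/-! ### Connectedness from overlap -/

lemma isPreconnected_of_overlap {E : Set (ℝ × ℝ)} (hE : IsCompact E)
    {f₀ f₁ : ℝ × ℝ → ℝ × ℝ} {ρ : ℝ} (hρ0 : 0 ≤ ρ) (hρ1 : ρ < 1)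
    (h₀ : ∀ u v, dist (f₀ u) (f₀ v) ≤ ρ * dist u v)
    (h₁ : ∀ u v, dist (f₁ u) (f₁ v) ≤ ρ * dist u v)
    (hcov : E = f₀ '' E ∪ f₁ '' E)
    (hov : (f₀ '' E ∩ f₁ '' E).Nonempty) :
    IsPreconnected E := by
  obtain ⟨p, hp₀, hp₁⟩ := hov
  have hbd : Bornology.IsBounded E := hE.isBounded
  have hsub₀ : f₀ '' E ⊆ E := Set.subset_union_left.trans hcov.symm.subset
  have hsub₁ : f₁ '' E ⊆ E := Set.subset_union_right.trans hcov.symm.subset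
  have key : ∀ n : ℕ, ∀ x ∈ E, ∀ y ∈ E, Chain E (ρ ^ n * Metric.diam E) x y := by
    intro n
    induction n with
    | zero =>
        intro x hx y hy
        exact ReflTransGen.single ⟨hy, by
          simpa using Metric.dist_le_diam_of_mem hbd hx hy⟩
    | succ n ih =>
        have sub : ∀ f : ℝ × ℝ → ℝ × ℝ, (∀ u v, dist (f u) (f v) ≤ ρ * dist u v) →
            f '' E ⊆ E → ∀ u ∈ f '' E, ∀ v ∈ f '' E,
            Chain E (ρ ^ (n + 1) * Metric.diam E) u v := by
          rintro f hf hfE u ⟨u', hu', rfl⟩ v ⟨v', hv', rfl⟩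
          have h := (Chain.map hρ0 hf (ih u' hu' v' hv')).mono_set hfE
          exact h.mono_eps (le_of_eq (by ring))
        intro x hx y hy
        have hx' : x ∈ f₀ '' E ∪ f₁ '' E := hcov ▸ hx
        have hy' : y ∈ f₀ '' E ∪ f₁ '' E := hcov ▸ hy
        have c1 : Chain E (ρ ^ (n + 1) * Metric.diam E) x p := by
          rcases hx' with h | h
          · exact sub f₀ h₀ hsub₀ x h p hp₀
          · exact sub f₁ h₁ hsub₁ x h p hp₁
        have c2 : Chain E (ρ ^ (n + 1) * Metric.diam E) p y := by
          rcases hy' with h | h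
          · exact sub f₀ h₀ hsub₀ p hp₀ y h
          · exact sub f₁ h₁ hsub₁ p hp₁ y h
        exact c1.trans c2
  intro U V hU hV hEUV hne1 hne2
  obtain ⟨x, hxE, hxU⟩ := hne1
  obtain ⟨y, hyE, hyV⟩ := hne2
  by_contra hcon
  rw [Set.not_nonempty_iff_eq_empty] at hcon
  have hEU : E ∩ U = E ∩ Vᶜ := by
    ext q
    constructor
    · rintro ⟨hqE, hqU⟩
      refine ⟨hqE, fun hqV => ?_⟩
      exact absurd (show q ∈ E ∩ (U ∩ V) from ⟨hqE, hqU, hqV⟩) (by simp [hcon])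
    · rintro ⟨hqE, hqV⟩
      exact ⟨hqE, (hEUV hqE).resolve_right hqV⟩
  have hEV : E ∩ V = E ∩ Uᶜ := by
    ext q
    constructor
    · rintro ⟨hqE, hqV⟩
      refine ⟨hqE, fun hqU => ?_⟩
      exact absurd (show q ∈ E ∩ (U ∩ V) from ⟨hqE, hqU, hqV⟩) (by simp [hcon])
    · rintro ⟨hqE, hqU⟩
      exact ⟨hqE, (hEUV hqE).resolve_left hqU⟩
  have hK1 : IsCompact (E ∩ U) := hEU ▸ hE.inter_right hV.isClosed_compl
  have hK2 : IsCompact (E ∩ V) := hEV ▸ hE.inter_right hU.isClosed_compl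
  obtain ⟨⟨p₀, q₀⟩, hpq, hmin⟩ := (hK1.prod hK2).exists_isMinOn
    ⟨(x, y), Set.mk_mem_prod ⟨hxE, hxU⟩ ⟨hyE, hyV⟩⟩
    (continuous_dist.continuousOn (s := (E ∩ U) ×ˢ (E ∩ V)))
  have hp₀ : p₀ ∈ E ∩ U := hpq.1
  have hq₀ : q₀ ∈ E ∩ V := hpq.2
  have hδ : 0 < dist p₀ q₀ := by
    rw [dist_pos]
    rintro rfl
    exact absurd (show p₀ ∈ E ∩ (U ∩ V) from ⟨hp₀.1, hp₀.2, hq₀.2⟩) (by simp [hcon])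
  have htend : Tendsto (fun n : ℕ => ρ ^ n * Metric.diam E) atTop (𝓝 0) := by
    simpa using (tendsto_pow_atTop_nhds_zero_of_lt_one hρ0 hρ1).mul_const (Metric.diam E)
  obtain ⟨n, hn⟩ := (htend.eventually_lt_const hδ).exists
  obtain ⟨pc, hpcU, qc, hqcV, hdc⟩ :=
    Chain.cross hEUV hcon hxE hxU (key n x hxE y hyE) hyV
  have h1 : dist p₀ q₀ ≤ dist pc qc :=
    isMinOn_iff.mp hmin (pc, qc) (Set.mk_mem_prod hpcU hqcV)
  linarith

/-! ### Power series computations -/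

def cons (v : ℝ) (a : ℕ → ℝ) : ℕ → ℝ := fun n => Nat.casesOn n v a

@[simp] lemma cons_zero (v : ℝ) (a : ℕ → ℝ) : cons v a 0 = v := rfl
@[simp] lemma cons_succ (v : ℝ) (a : ℕ → ℝ) (n : ℕ) : cons v a (n + 1) = a n := rfl

def dseq (a a' : ℕ → ℝ) : ℕ → ℝ := cons 1 fun k => a' k - a k

lemma summable_aux {x b M : ℝ} (hx : |x| < 1) {a : ℕ → ℝ} (ha : ∀ n, |a n| ≤ M) :
    Summable fun n => a n * x ^ n * b := by
  apply Summable.of_norm_bounded (g := fun n => M * |x| ^ n * |b|)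
  · exact (((summable_geometric_of_lt_one (abs_nonneg x) hx).mul_left M).mul_right |b|)
  · intro n
    rw [Real.norm_eq_abs, abs_mul, abs_mul, abs_pow]
    have h0 : (0:ℝ) ≤ |x| ^ n := pow_nonneg (abs_nonneg x) n
    exact mul_le_mul_of_nonneg_right
      (mul_le_mul_of_nonneg_right (ha n) (pow_nonneg (abs_nonneg x) n)) (abs_nonneg b)

lemma summable_aux' {x M : ℝ} (hx : |x| < 1) {a : ℕ → ℝ} (ha : ∀ n, |a n| ≤ M) :
    Summable fun n => a n * x ^ n := by
  simpa using summable_aux (b := 1) hx ha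

lemma tsum_diff_eq {x b M : ℝ} (hx : |x| < 1) {a a' : ℕ → ℝ}
    (ha : ∀ n, |a n| ≤ M) (ha' : ∀ n, |a' n| ≤ M) :
    x * (∑' n, a n * x ^ n * b) - x * (∑' n, a' n * x ^ n * b)
      = (∑' n, (a n - a' n) * x ^ (n + 1)) * b := by
  rw [← tsum_mul_left, ← tsum_mul_left,
    ← Summable.tsum_sub ((summable_aux hx ha).mul_left x) ((summable_aux hx ha').mul_left x),
    ← tsum_mul_right]
  apply tsum_congr
  intro n
  rw [pow_succ]
  ring

lemma tail_eq {x : ℝ} (hx : |x| < 1) {c : ℕ → ℝ} (hc : ∀ n, |c n| ≤ 1) :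
    seriesFun c x = c 0 + ∑' n, c (n + 1) * x ^ (n + 1) := by
  unfold seriesFun
  rw [Summable.tsum_eq_zero_add (summable_aux' hx hc)]
  simp

lemma tsum_cons {x b v M : ℝ} (hx : |x| < 1) {a : ℕ → ℝ} (ha : ∀ n, |a n| ≤ M)
    (hv : |v| ≤ M) :
    (∑' n, cons v a n * x ^ n * b)
      = v * b + x * (∑' n, a n * x ^ n * b) := by
  have hca : ∀ n, |cons v a n| ≤ M := by
    intro n; cases n <;> simp [hv, ha _]
  rw [Summable.tsum_eq_zero_add (summable_aux hx hca)]
  have h1 : cons v a 0 * x ^ 0 * b = v * b := by simp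
  have h2 : (∑' n, cons v a (n + 1) * x ^ (n + 1) * b)
      = x * (∑' n, a n * x ^ n * b) := by
    rw [← tsum_mul_left]
    apply tsum_congr
    intro n
    show a n * x ^ (n + 1) * b = x * (a n * x ^ n * b)
    rw [pow_succ]; ring
  rw [h1, h2]

lemma lip_aux {c d ρ : ℝ} (hc : |c| ≤ ρ) (hd : |d| ≤ ρ) (hρ : 0 ≤ ρ) (e f : ℝ)
    (u v : ℝ × ℝ) :
    dist (c * u.1 + e, d * u.2 + f) (c * v.1 + e, d * v.2 + f) ≤ ρ * dist u v := by
  rw [Prod.dist_eq, Prod.dist_eq]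
  apply max_le
  · calc dist (c * u.1 + e) (c * v.1 + e) = |c| * |u.1 - v.1| := by
          rw [Real.dist_eq, ← abs_mul]; congr 1; ring
      _ ≤ ρ * (dist u.1 v.1 ⊔ dist u.2 v.2) := by
          rw [Real.dist_eq, Real.dist_eq]
          exact mul_le_mul hc (le_max_left _ _) (abs_nonneg _) hρ
  · calc dist (d * u.2 + f) (d * v.2 + f) = |d| * |u.2 - v.2| := by
          rw [Real.dist_eq, ← abs_mul]; congr 1; ring
      _ ≤ ρ * (dist u.1 v.1 ⊔ dist u.2 v.2) := by
          rw [Real.dist_eq, Real.dist_eq]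
          exact mul_le_mul hd (le_max_right _ _) (abs_nonneg _) hρ

lemma memB_abs {c : ℕ → ℝ} (hc : memB c) : ∀ n, |c n| ≤ 1 := by
  intro n
  cases n with
  | zero => rw [hc.1]; norm_num
  | succ k => rcases hc.2 (k + 1) (Nat.le_add_left 1 k) with h | h | h <;> rw [h] <;> norm_num

/-- From a series `f ∈ ℬ` vanishing at `x`, the two binary digit sequences
give coinciding points. -/
lemma coord_eq {x b : ℝ} (hx : |x| < 1) {c : ℕ → ℝ} (hc : memB c)
    (h0 : seriesFun c x = 0) :
    x * (∑' n, (fun n => if c (n + 1) = -1 then (1 : ℝ) else 0) n * x ^ n * b)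
      = x * (∑' n, (fun n => if c (n + 1) = 1 then (1 : ℝ) else 0) n * x ^ n * b) + b := by
  set aM : ℕ → ℝ := fun n => if c (n + 1) = -1 then (1 : ℝ) else 0 with haM
  set aP : ℕ → ℝ := fun n => if c (n + 1) = 1 then (1 : ℝ) else 0 with haP
  have hM : ∀ n, |aM n| ≤ 1 := by
    intro n; rw [haM]; dsimp only; split <;> norm_num
  have hP : ∀ n, |aP n| ≤ 1 := by
    intro n; rw [haP]; dsimp only; split <;> norm_num
  have haMP : ∀ n, aM n - aP n = -c (n + 1) := by
    intro n
    rcases hc.2 (n + 1) (Nat.le_add_left 1 n) with h | h | h <;>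
      simp [haM, haP, h] <;> norm_num
  have hdiff : (∑' n, (aM n - aP n) * x ^ (n + 1)) = 1 := by
    have h1 : (∑' n, (aM n - aP n) * x ^ (n + 1))
        = ∑' n, -(c (n + 1) * x ^ (n + 1)) :=
      tsum_congr fun n => by rw [haMP n]; ring
    have ht := tail_eq hx (memB_abs hc)
    rw [h0, hc.1] at ht
    rw [h1, tsum_neg]
    linarith
  have hd := tsum_diff_eq (b := b) hx hM hP
  rw [hdiff, one_mul] at hd
  linarith

/-- Conversely, coinciding points give a series in `ℬ` vanishing at `x`. -/
lemma series_zero_of_coord {x b : ℝ} (hx : |x| < 1) (hb : b ≠ 0) {a a' : ℕ → ℝ}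
    (ha : ∀ n, a n = 0 ∨ a n = 1) (ha' : ∀ n, a' n = 0 ∨ a' n = 1)
    (heq : x * (∑' n, a n * x ^ n * b) = x * (∑' n, a' n * x ^ n * b) + b) :
    seriesFun (dseq a a') x = 0 := by
  have habs : ∀ n, |a n| ≤ 1 := by intro n; rcases ha n with h | h <;> rw [h] <;> norm_num
  have habs' : ∀ n, |a' n| ≤ 1 := by intro n; rcases ha' n with h | h <;> rw [h] <;> norm_num
  have hcabs : ∀ n, |dseq a a' n| ≤ 1 := by
    intro n
    cases n with
    | zero => show |(1:ℝ)| ≤ 1; norm_num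
    | succ k =>
        show |a' k - a k| ≤ 1
        rcases ha' k with h1 | h1 <;> rcases ha k with h2 | h2 <;> rw [h1, h2] <;> norm_num
  have hd := tsum_diff_eq (b := b) hx habs habs'
  have hdb : (∑' n, (a n - a' n) * x ^ (n + 1)) * b = 1 * b := by
    rw [one_mul, ← hd]; linarith
  have hdiff : (∑' n, (a n - a' n) * x ^ (n + 1)) = 1 := mul_right_cancel₀ hb hdb
  have ht := tail_eq hx hcabs
  have h2 : (∑' n, dseq a a' (n + 1) * x ^ (n + 1))
      = ∑' n, -((a n - a' n) * x ^ (n + 1)) :=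
    tsum_congr fun n => by show (a' n - a n) * x ^ (n + 1) = _; ring
  rw [h2, tsum_neg, hdiff] at ht
  show seriesFun _ x = 0
  rw [ht]
  show (1 : ℝ) + -1 = 0
  norm_num

lemma memB_diff {a a' : ℕ → ℝ} (ha : ∀ n, a n = 0 ∨ a n = 1)
    (ha' : ∀ n, a' n = 0 ∨ a' n = 1) :
    memB (dseq a a') := by
  refine ⟨rfl, fun n hn => ?_⟩
  cases n with
  | zero => omega
  | succ k =>
      show a' k - a k = -1 ∨ a' k - a k = 0 ∨ a' k - a k = 1
      rcases ha' k with h1 | h1 <;> rcases ha k with h2 | h2 <;> rw [h1, h2] <;> norm_num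

end Stmt1Aux

open Stmt1Aux in
/-- For `γ, λ ∈ (-1,1)` distinct and `b₁, b₂ ≠ 0`, the attractor of
`{Tx, Tx + (b₁,b₂)}` with `T = diag(γ,λ)` is connected iff some `f ∈ ℬ` vanishes at
both `γ` and `λ`. -/
theorem stmt1 (γ lam : ℝ) (hγ : γ ∈ Set.Ioo (-1 : ℝ) 1) (hlam : lam ∈ Set.Ioo (-1 : ℝ) 1)
    (hne : γ ≠ lam) (b₁ b₂ : ℝ) (hb₁ : b₁ ≠ 0) (hb₂ : b₂ ≠ 0) :
    IsConnected {p : ℝ × ℝ | ∃ a : ℕ → ℝ, (∀ n, a n = 0 ∨ a n = 1) ∧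
        p.1 = ∑' n, a n * γ ^ n * b₁ ∧ p.2 = ∑' n, a n * lam ^ n * b₂} ↔
      ∃ c : ℕ → ℝ, memB c ∧ seriesFun c γ = 0 ∧ seriesFun c lam = 0 := by
  have hγ1 : |γ| < 1 := abs_lt.mpr ⟨hγ.1, hγ.2⟩
  have hlam1 : |lam| < 1 := abs_lt.mpr ⟨hlam.1, hlam.2⟩
  set S : Set (ℕ → ℝ) := {a | ∀ n, a n = 0 ∨ a n = 1} with hS
  set Pt : (ℕ → ℝ) → ℝ × ℝ :=
    fun a => (∑' n, a n * γ ^ n * b₁, ∑' n, a n * lam ^ n * b₂) with hPt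
  have habs : ∀ a ∈ S, ∀ n, |a n| ≤ 1 := by
    intro a ha n; rcases ha n with h | h <;> rw [h] <;> norm_num
  have hEeq : {p : ℝ × ℝ | ∃ a : ℕ → ℝ, (∀ n, a n = 0 ∨ a n = 1) ∧
      p.1 = ∑' n, a n * γ ^ n * b₁ ∧ p.2 = ∑' n, a n * lam ^ n * b₂} = Pt '' S := by
    ext p
    constructor
    · rintro ⟨a, ha, h1, h2⟩
      exact ⟨a, ha, Prod.ext h1.symm h2.symm⟩
    · rintro ⟨a, ha, rfl⟩
      exact ⟨a, ha, rfl, rfl⟩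
  rw [hEeq]
  -- compactness of the attractor
  have hScomp : IsCompact S := by
    have h : S = Set.pi Set.univ (fun _ : ℕ => ({0, 1} : Set ℝ)) := by
      ext a; simp [hS, Set.mem_pi]
    rw [h]
    exact isCompact_univ_pi fun _ => (Set.toFinite _).isCompact
  have hcont : ContinuousOn Pt S := by
    rw [continuousOn_iff_continuous_restrict]
    apply Continuous.prodMk
    · apply continuous_tsum (u := fun n => 1 * |γ| ^ n * |b₁|)
        (f := fun n (a : S) => (a : ℕ → ℝ) n * γ ^ n * b₁)
      · intro n
        exact (((continuous_apply n).comp continuous_subtype_val).mul continuous_const).mul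
          continuous_const
      · exact ((summable_geometric_of_lt_one (abs_nonneg γ) hγ1).mul_left 1).mul_right _
      · intro n a
        rw [Real.norm_eq_abs, abs_mul, abs_mul, abs_pow]
        exact mul_le_mul_of_nonneg_right
          (mul_le_mul_of_nonneg_right (habs a a.2 n) (pow_nonneg (abs_nonneg γ) n))
          (abs_nonneg b₁)
    · apply continuous_tsum (u := fun n => 1 * |lam| ^ n * |b₂|)
        (f := fun n (a : S) => (a : ℕ → ℝ) n * lam ^ n * b₂)
      · intro n
        exact (((continuous_apply n).comp continuous_subtype_val).mul continuous_const).mul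
          continuous_const
      · exact ((summable_geometric_of_lt_one (abs_nonneg lam) hlam1).mul_left 1).mul_right _
      · intro n a
        rw [Real.norm_eq_abs, abs_mul, abs_mul, abs_pow]
        exact mul_le_mul_of_nonneg_right
          (mul_le_mul_of_nonneg_right (habs a a.2 n) (pow_nonneg (abs_nonneg lam) n))
          (abs_nonneg b₂)
  have hEcomp : IsCompact (Pt '' S) := hScomp.image_of_continuousOn hcont
  -- the two affine maps
  set A₀ : ℝ × ℝ → ℝ × ℝ := fun p => (γ * p.1, lam * p.2) with hA₀
  set A₁ : ℝ × ℝ → ℝ × ℝ := fun p => (γ * p.1 + b₁, lam * p.2 + b₂) with hA₁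
  have hPtcons : ∀ (v : ℝ), |v| ≤ 1 → ∀ a ∈ S,
      Pt (cons v a) = (v * b₁ + γ * (Pt a).1, v * b₂ + lam * (Pt a).2) := by
    intro v hv a ha
    exact Prod.ext (tsum_cons hγ1 (habs a ha) hv) (tsum_cons hlam1 (habs a ha) hv)
  have hconsS : ∀ (v : ℝ), (v = 0 ∨ v = 1) → ∀ a ∈ S, cons v a ∈ S := by
    intro v hv a ha n
    cases n with
    | zero => exact hv
    | succ k => exact ha k
  have hA₀Pt : ∀ a ∈ S, A₀ (Pt a) = Pt (cons 0 a) := by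
    intro a ha
    rw [hPtcons 0 (by norm_num) a ha]
    apply Prod.ext <;> simp [hA₀]
  have hA₁Pt : ∀ a ∈ S, A₁ (Pt a) = Pt (cons 1 a) := by
    intro a ha
    rw [hPtcons 1 (by norm_num) a ha]
    apply Prod.ext <;> simp [hA₁] <;> ring
  have hcov : Pt '' S = A₀ '' (Pt '' S) ∪ A₁ '' (Pt '' S) := by
    apply Set.Subset.antisymm
    · rintro p ⟨a, ha, rfl⟩
      have hshift : (fun n => a (n + 1)) ∈ S := fun n => ha (n + 1)
      have heta : ∀ v, a 0 = v → Pt (cons v (fun n => a (n + 1))) = Pt a := by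
        intro v hv
        congr 1
        funext n
        cases n with
        | zero => exact hv.symm
        | succ k => rfl
      rcases ha 0 with h0 | h0
      · exact Or.inl ⟨Pt (fun n => a (n + 1)), ⟨_, hshift, rfl⟩,
          by rw [hA₀Pt _ hshift, heta 0 h0]⟩
      · exact Or.inr ⟨Pt (fun n => a (n + 1)), ⟨_, hshift, rfl⟩,
          by rw [hA₁Pt _ hshift, heta 1 h0]⟩
    · rintro p (⟨q, ⟨a, ha, rfl⟩, rfl⟩ | ⟨q, ⟨a, ha, rfl⟩, rfl⟩)
      · rw [hA₀Pt a ha]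
        exact Set.mem_image_of_mem _ (hconsS 0 (Or.inl rfl) a ha)
      · rw [hA₁Pt a ha]
        exact Set.mem_image_of_mem _ (hconsS 1 (Or.inr rfl) a ha)
  -- Lipschitz constants
  set ρ : ℝ := max |γ| |lam| with hρ
  have hρ0 : (0 : ℝ) ≤ ρ := le_trans (abs_nonneg γ) (le_max_left _ _)
  have hρ1 : ρ < 1 := max_lt hγ1 hlam1
  have hlip0 : ∀ u v : ℝ × ℝ, dist (A₀ u) (A₀ v) ≤ ρ * dist u v := by
    intro u v
    simpa [hA₀] using lip_aux (le_max_left |γ| |lam|) (le_max_right |γ| |lam|) hρ0 0 0 u v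
  have hlip1 : ∀ u v : ℝ × ℝ, dist (A₁ u) (A₁ v) ≤ ρ * dist u v := by
    intro u v
    simpa [hA₁] using lip_aux (le_max_left |γ| |lam|) (le_max_right |γ| |lam|) hρ0 b₁ b₂ u v
  -- overlap ↔ existence of the series
  constructor
  · intro hconn
    by_contra hno
    have hov : A₀ '' (Pt '' S) ∩ A₁ '' (Pt '' S) = ∅ := by
      rw [Set.eq_empty_iff_forall_notMem]
      rintro q ⟨⟨w, ⟨a, haS, rfl⟩, rfl⟩, w', ⟨a', ha'S, rfl⟩, heq⟩
      have h1 : γ * (∑' n, a n * γ ^ n * b₁) = γ * (∑' n, a' n * γ ^ n * b₁) + b₁ :=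
        (congrArg Prod.fst heq).symm
      have h2 : lam * (∑' n, a n * lam ^ n * b₂) = lam * (∑' n, a' n * lam ^ n * b₂) + b₂ :=
        (congrArg Prod.snd heq).symm
      exact hno ⟨dseq a a', memB_diff haS ha'S,
        series_zero_of_coord hγ1 hb₁ haS ha'S h1,
        series_zero_of_coord hlam1 hb₂ haS ha'S h2⟩
    -- disconnect
    have hcA₀ : Continuous A₀ :=
      (continuous_const.mul continuous_fst).prodMk (continuous_const.mul continuous_snd)
    have hcA₁ : Continuous A₁ :=
      ((continuous_const.mul continuous_fst).add continuous_const).prodMk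
        ((continuous_const.mul continuous_snd).add continuous_const)
    have hK₀ : IsCompact (A₀ '' (Pt '' S)) := hEcomp.image hcA₀
    have hK₁ : IsCompact (A₁ '' (Pt '' S)) := hEcomp.image hcA₁
    obtain ⟨U, V, hUo, hVo, h0U, h1V, hUV⟩ :=
      SeparatedNhds.of_isCompact_isCompact hK₀ hK₁
        (Set.disjoint_iff_inter_eq_empty.mpr hov)
    have hzS : (fun _ : ℕ => (0 : ℝ)) ∈ S := fun _ => Or.inl rfl
    have hxU : A₀ (Pt fun _ => 0) ∈ Pt '' S ∩ U :=
      ⟨hcov.symm.subset (Or.inl (Set.mem_image_of_mem _ (Set.mem_image_of_mem _ hzS))),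
       h0U (Set.mem_image_of_mem _ (Set.mem_image_of_mem _ hzS))⟩
    have hyV : A₁ (Pt fun _ => 0) ∈ Pt '' S ∩ V :=
      ⟨hcov.symm.subset (Or.inr (Set.mem_image_of_mem _ (Set.mem_image_of_mem _ hzS))),
       h1V (Set.mem_image_of_mem _ (Set.mem_image_of_mem _ hzS))⟩
    have hsub : Pt '' S ⊆ U ∪ V := by
      rw [hcov]
      exact Set.union_subset_union h0U h1V
    obtain ⟨z, _, hzUV⟩ := hconn.isPreconnected U V hUo hVo hsub ⟨_, hxU⟩ ⟨_, hyV⟩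
    exact Set.disjoint_iff.mp hUV hzUV
  · rintro ⟨c, hc, hcγ, hclam⟩
    set aM : ℕ → ℝ := fun n => if c (n + 1) = -1 then (1 : ℝ) else 0 with haM
    set aP : ℕ → ℝ := fun n => if c (n + 1) = 1 then (1 : ℝ) else 0 with haP
    have haMS : aM ∈ S := by
      intro n; rw [haM]; dsimp only; split
      · exact Or.inr rfl
      · exact Or.inl rfl
    have haPS : aP ∈ S := by
      intro n; rw [haP]; dsimp only; split
      · exact Or.inr rfl
      · exact Or.inl rfl
    have hco1 := coord_eq (b := b₁) hγ1 hc hcγ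
    have hco2 := coord_eq (b := b₂) hlam1 hc hclam
    have hov : (A₀ '' (Pt '' S) ∩ A₁ '' (Pt '' S)).Nonempty := by
      refine ⟨A₀ (Pt aM), Set.mem_image_of_mem _ (Set.mem_image_of_mem _ haMS),
        ⟨Pt aP, Set.mem_image_of_mem _ haPS, ?_⟩⟩
      exact Prod.ext hco1.symm hco2.symm
    exact ⟨⟨Pt fun _ => 0, Set.mem_image_of_mem _ fun _ => Or.inl rfl⟩,
      isPreconnected_of_overlap hEcomp hρ0 hρ1 hlip0 hlip1 hcov hov⟩
end
end

section
/- Let λ ∈ (−1,1), let T be the 2×2 real matrix [[λ, 1], [0, λ]], and let b = (b₁, b₂) ∈ ℝ² with b₂ ≠ 0. Then the self-affine set E = { ∑_{n=0}^∞ aₙ Tⁿ b : (aₙ) ∈ {0,1}^ℕ } ⊆ ℝ² (the attractor of the iterated function system {Tx, Tx + b}) is connected if and only if there exists f ∈ ℬ with f(λ) = 0 and f′(λ) = 0. -/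
open Set Filter Topology

noncomputable section

section auxStmt2
open Metric

/-- explicit form of `[[λ,1],[0,λ]]^n ⬝ d`. -/
def vb (lam : ℝ) (d : Fin 2 → ℝ) (n : ℕ) : Fin 2 → ℝ :=
  ![lam ^ n * d 0 + n * lam ^ (n - 1) * d 1, lam ^ n * d 1]

lemma pow_mulVec (lam : ℝ) (d : Fin 2 → ℝ) (n : ℕ) :
    (!![lam, 1; 0, lam] ^ n).mulVec d = vb lam d n := by
  induction n with
  | zero =>
      funext i
      fin_cases i <;> simp [vb, Matrix.mulVec, dotProduct]
  | succ n ih =>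
      rw [pow_succ', ← Matrix.mulVec_mulVec, ih]
      funext i
      fin_cases i <;>
        simp [vb, Matrix.mulVec, dotProduct, Fin.sum_univ_two, Matrix.cons_val_zero,
          Matrix.cons_val_one] <;>
      · cases n with
        | zero => ring
        | succ m => push_cast; ring

/-- coefficient bound for `vb`. -/
def cc (lam : ℝ) (n : ℕ) : ℝ := |lam| ^ n + n * |lam| ^ (n - 1)

lemma cc_nonneg (lam : ℝ) (n : ℕ) : 0 ≤ cc lam n := by
  unfold cc; positivity

lemma norm_vb_le (lam : ℝ) (d : Fin 2 → ℝ) (n : ℕ) : ‖vb lam d n‖ ≤ cc lam n * ‖d‖ := by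
  have hd : (0:ℝ) ≤ ‖d‖ := norm_nonneg d
  have h0 : ‖d 0‖ ≤ ‖d‖ := norm_le_pi_norm d 0
  have h1 : ‖d 1‖ ≤ ‖d‖ := norm_le_pi_norm d 1
  rw [pi_norm_le_iff_of_nonneg (mul_nonneg (cc_nonneg lam n) hd)]
  intro i
  have e0 : ‖lam ^ n * d 0‖ ≤ |lam| ^ n * ‖d‖ := by
    rw [norm_mul, norm_pow, Real.norm_eq_abs]
    exact mul_le_mul_of_nonneg_left h0 (pow_nonneg (abs_nonneg lam) n)
  have e1 : ‖(n : ℝ) * lam ^ (n - 1) * d 1‖ ≤ (n : ℝ) * |lam| ^ (n - 1) * ‖d‖ := by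
    rw [norm_mul, norm_mul, norm_pow, Real.norm_natCast, Real.norm_eq_abs]
    exact mul_le_mul_of_nonneg_left h1 (by positivity)
  fin_cases i
  · simp only [vb, Matrix.cons_val_zero]
    calc ‖lam ^ n * d 0 + (n : ℝ) * lam ^ (n - 1) * d 1‖
        ≤ ‖lam ^ n * d 0‖ + ‖(n : ℝ) * lam ^ (n - 1) * d 1‖ := norm_add_le _ _
      _ ≤ |lam| ^ n * ‖d‖ + (n : ℝ) * |lam| ^ (n - 1) * ‖d‖ := add_le_add e0 e1
      _ = cc lam n * ‖d‖ := by rw [cc]; ring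
  · simp only [vb, Matrix.cons_val_one, Matrix.head_cons]
    have e2 : ‖lam ^ n * d 1‖ ≤ |lam| ^ n * ‖d‖ := by
      rw [norm_mul, norm_pow, Real.norm_eq_abs]
      exact mul_le_mul_of_nonneg_left h1 (pow_nonneg (abs_nonneg lam) n)
    have e3 : 0 ≤ (n : ℝ) * |lam| ^ (n - 1) * ‖d‖ := by positivity
    calc ‖lam ^ n * d 1‖ ≤ |lam| ^ n * ‖d‖ := e2
      _ ≤ cc lam n * ‖d‖ := by rw [cc]; nlinarith

lemma summable_cc {lam : ℝ} (h : |lam| < 1) : Summable (cc lam) := by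
  have h0 : (0:ℝ) ≤ |lam| := abs_nonneg lam
  apply Summable.add (summable_geometric_of_lt_one h0 h)
  rw [← summable_nat_add_iff 1]
  simp only [Nat.add_sub_cancel]
  have h2 : Summable (fun n : ℕ => (n:ℝ) * |lam| ^ n) := by
    simpa using summable_pow_mul_geometric_of_norm_lt_one 1 (by simpa using h)
  have h3 : Summable (fun n : ℕ => |lam| ^ n) := summable_geometric_of_lt_one h0 h
  have := h2.add h3
  apply this.congr
  intro n; push_cast; ring

lemma cc_tendsto {lam : ℝ} (h : |lam| < 1) : Tendsto (cc lam) atTop (nhds 0) :=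
  (summable_cc h).tendsto_atTop_zero

def Ssum (lam : ℝ) (b : Fin 2 → ℝ) (a : ℕ → ℝ) : Fin 2 → ℝ := ∑' n, a n • vb lam b n

def Aset : Set (ℕ → ℝ) := {a | ∀ n, a n = 0 ∨ a n = 1}

lemma vb_succ (lam : ℝ) (b : Fin 2 → ℝ) (n : ℕ) :
    vb lam b (n + 1) = (!![lam, 1; 0, lam]).mulVec (vb lam b n) := by
  rw [← pow_mulVec, ← pow_mulVec, Matrix.mulVec_mulVec, ← pow_succ']

lemma summable_smul_vb {lam : ℝ} (h : |lam| < 1) (b : Fin 2 → ℝ) {a : ℕ → ℝ}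
    (ha : ∀ n, |a n| ≤ 1) : Summable (fun n => a n • vb lam b n) := by
  apply Summable.of_norm
  apply Summable.of_nonneg_of_le (fun n => norm_nonneg _)
    (fun n => ?_) ((summable_cc h).mul_right ‖b‖)
  rw [norm_smul, Real.norm_eq_abs]
  calc |a n| * ‖vb lam b n‖ ≤ 1 * ‖vb lam b n‖ :=
        mul_le_mul_of_nonneg_right (ha n) (norm_nonneg _)
    _ = ‖vb lam b n‖ := one_mul _
    _ ≤ cc lam n * ‖b‖ := norm_vb_le lam b n

/-- `mulVec` as a continuous linear map on `ℝ²`. -/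
def Tc (lam : ℝ) : (Fin 2 → ℝ) →L[ℝ] (Fin 2 → ℝ) :=
  LinearMap.toContinuousLinearMap (Matrix.mulVecLin !![lam, 1; 0, lam])

lemma Tc_apply (lam : ℝ) (x : Fin 2 → ℝ) : Tc lam x = (!![lam, 1; 0, lam]).mulVec x := rfl

lemma mulVec_tsum {lam : ℝ} {f : ℕ → Fin 2 → ℝ} (hf : Summable f) :
    (!![lam, 1; 0, lam]).mulVec (∑' n, f n) = ∑' n, (!![lam, 1; 0, lam]).mulVec (f n) := by
  simpa [Tc_apply] using (Tc lam).map_tsum hf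

lemma Ssum_shift {lam : ℝ} (h : |lam| < 1) (b : Fin 2 → ℝ) {a : ℕ → ℝ}
    (ha : ∀ n, |a n| ≤ 1) :
    Ssum lam b a = a 0 • b + (!![lam, 1; 0, lam]).mulVec (Ssum lam b (fun n => a (n + 1))) := by
  have hs := summable_smul_vb h b ha
  have hs' := summable_smul_vb h b (fun n => ha (n + 1))
  rw [Ssum, Summable.tsum_eq_zero_add hs]
  congr 1
  · congr 1
    funext i; fin_cases i <;> simp [vb]
  · rw [Ssum, mulVec_tsum hs']
    congr 1; funext n
    rw [Matrix.mulVec_smul, ← vb_succ]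

def consSeq (t : ℝ) (a : ℕ → ℝ) : ℕ → ℝ := fun n => if n = 0 then t else a (n - 1)

lemma Ssum_cons {lam : ℝ} (h : |lam| < 1) (b : Fin 2 → ℝ) {a : ℕ → ℝ}
    (ha : ∀ n, |a n| ≤ 1) (t : ℝ) (ht : |t| ≤ 1) :
    Ssum lam b (consSeq t a) = t • b + (!![lam, 1; 0, lam]).mulVec (Ssum lam b a) := by
  have hc : ∀ n, |consSeq t a n| ≤ 1 := by
    intro n; cases n with
    | zero => simpa [consSeq] using ht
    | succ m => simpa [consSeq] using ha m
  rw [Ssum_shift h b hc]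
  simp [consSeq]

lemma abs_le_one_of_mem_Aset {a : ℕ → ℝ} (ha : a ∈ Aset) : ∀ n, |a n| ≤ 1 := by
  intro n; rcases ha n with h | h <;> simp [h]

lemma isCompact_Aset : IsCompact Aset := by
  have : Aset = Set.pi Set.univ (fun _ : ℕ => ({0, 1} : Set ℝ)) := by
    ext a; simp [Aset, Set.mem_pi]
  rw [this]
  exact isCompact_univ_pi (fun i => ((Set.finite_singleton (1:ℝ)).insert 0).isCompact)

lemma continuousOn_Ssum {lam : ℝ} (h : |lam| < 1) (b : Fin 2 → ℝ) :
    ContinuousOn (Ssum lam b) Aset := by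
  have hu : Summable (fun n => cc lam n * ‖b‖) := (summable_cc h).mul_right _
  have key : TendstoUniformlyOn (fun (t : Finset ℕ) (a : ℕ → ℝ) => ∑ n ∈ t, a n • vb lam b n)
      (fun a => ∑' n, a n • vb lam b n) atTop Aset := by
    apply tendstoUniformlyOn_tsum hu
    intro n a ha
    rw [norm_smul, Real.norm_eq_abs]
    calc |a n| * ‖vb lam b n‖ ≤ 1 * ‖vb lam b n‖ :=
          mul_le_mul_of_nonneg_right (abs_le_one_of_mem_Aset ha n) (norm_nonneg _)
      _ = ‖vb lam b n‖ := one_mul _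
      _ ≤ cc lam n * ‖b‖ := norm_vb_le lam b n
  exact key.continuousOn (Eventually.of_forall fun t =>
    (continuous_finset_sum t fun n _ => ((continuous_apply n).smul continuous_const)).continuousOn).frequently

lemma norm_Ssum_le {lam : ℝ} (h : |lam| < 1) (b : Fin 2 → ℝ) {a : ℕ → ℝ}
    (ha : ∀ n, |a n| ≤ 1) : ‖Ssum lam b a‖ ≤ ∑' n, cc lam n * ‖b‖ := by
  have hs := summable_smul_vb h b ha
  calc ‖Ssum lam b a‖ ≤ ∑' n, ‖a n • vb lam b n‖ :=
        norm_tsum_le_tsum_norm hs.norm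
    _ ≤ ∑' n, cc lam n * ‖b‖ := by
        apply Summable.tsum_le_tsum _ hs.norm ((summable_cc h).mul_right _)
        intro n
        rw [norm_smul, Real.norm_eq_abs]
        calc |a n| * ‖vb lam b n‖ ≤ 1 * ‖vb lam b n‖ :=
              mul_le_mul_of_nonneg_right (ha n) (norm_nonneg _)
          _ = ‖vb lam b n‖ := one_mul _
          _ ≤ cc lam n * ‖b‖ := norm_vb_le lam b n

lemma summable_nmul {r : ℝ} (h0 : 0 ≤ r) (h : r < 1) :
    Summable (fun n : ℕ => (n : ℝ) * r ^ (n - 1)) := by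
  rw [← summable_nat_add_iff 1]
  simp only [Nat.add_sub_cancel]
  have h2 : Summable (fun n : ℕ => (n : ℝ) * r ^ n) := by
    simpa using summable_pow_mul_geometric_of_norm_lt_one 1
      (show ‖r‖ < 1 by rwa [Real.norm_eq_abs, abs_of_nonneg h0])
  have h3 : Summable (fun n : ℕ => r ^ n) := summable_geometric_of_lt_one h0 h
  apply (h2.add h3).congr
  intro n; push_cast; ring

lemma summable_coeff {lam : ℝ} (h : |lam| < 1) {c : ℕ → ℝ} (hc : ∀ n, |c n| ≤ 1) :
    Summable (fun n => c n * lam ^ n) := by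
  apply Summable.of_norm
  apply Summable.of_nonneg_of_le (fun n => norm_nonneg _) (fun n => ?_)
    (summable_geometric_of_lt_one (abs_nonneg lam) h)
  rw [Real.norm_eq_abs, abs_mul, abs_pow]
  calc |c n| * |lam| ^ n ≤ 1 * |lam| ^ n :=
        mul_le_mul_of_nonneg_right (hc n) (by positivity)
    _ = |lam| ^ n := one_mul _

lemma summable_dcoeff {lam : ℝ} (h : |lam| < 1) {c : ℕ → ℝ} (hc : ∀ n, |c n| ≤ 1) :
    Summable (fun n => c n * ((n : ℝ) * lam ^ (n - 1))) := by
  apply Summable.of_norm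
  apply Summable.of_nonneg_of_le (fun n => norm_nonneg _) (fun n => ?_)
    (summable_nmul (abs_nonneg lam) h)
  rw [Real.norm_eq_abs, abs_mul, abs_mul, abs_pow, Nat.abs_cast]
  calc |c n| * ((n : ℝ) * |lam| ^ (n - 1)) ≤ 1 * ((n : ℝ) * |lam| ^ (n - 1)) := by
        apply mul_le_mul_of_nonneg_right (hc n); positivity
    _ = (n : ℝ) * |lam| ^ (n - 1) := one_mul _

lemma hasDerivAt_seriesFun {lam : ℝ} (h : |lam| < 1) {c : ℕ → ℝ} (hc : ∀ n, |c n| ≤ 1) :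
    HasDerivAt (seriesFun c) (∑' n, c n * ((n : ℝ) * lam ^ (n - 1))) lam := by
  set r : ℝ := (1 + |lam|) / 2 with hr
  have hr0 : 0 ≤ r := by positivity
  have hr1 : r < 1 := by rw [hr]; linarith
  have hlr : |lam| < r := by rw [hr]; linarith
  have hmem : lam ∈ Ioo (-r) r := by
    have := abs_lt.mp hlr
    exact ⟨this.1, this.2⟩
  apply hasDerivAt_tsum_of_isPreconnected
    (u := fun n : ℕ => (n : ℝ) * r ^ (n - 1)) (summable_nmul hr0 hr1)
    isOpen_Ioo (convex_Ioo _ _).isPreconnected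
    (g := fun n x => c n * x ^ n) (g' := fun n x => c n * ((n : ℝ) * x ^ (n - 1)))
    ?_ ?_ hmem (summable_coeff h hc) hmem
  · intro n y _
    exact (hasDerivAt_pow n y).const_mul (c n)
  · intro n y hy
    have hyr : |y| ≤ r := by
      rw [abs_le]; exact ⟨le_of_lt hy.1, le_of_lt hy.2⟩
    rw [Real.norm_eq_abs, abs_mul, abs_mul, abs_pow, Nat.abs_cast]
    calc |c n| * ((n : ℝ) * |y| ^ (n - 1)) ≤ 1 * ((n : ℝ) * r ^ (n - 1)) := by
          apply mul_le_mul (hc n) _ (by positivity) zero_le_one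
          exact mul_le_mul_of_nonneg_left (pow_le_pow_left₀ (abs_nonneg y) hyr _) (Nat.cast_nonneg n)
    _ = (n : ℝ) * r ^ (n - 1) := one_mul _

lemma deriv_seriesFun {lam : ℝ} (h : |lam| < 1) {c : ℕ → ℝ} (hc : ∀ n, |c n| ≤ 1) :
    deriv (seriesFun c) lam = ∑' n, c n * ((n : ℝ) * lam ^ (n - 1)) :=
  (hasDerivAt_seriesFun h hc).deriv

lemma Ssum_apply_one {lam : ℝ} (h : |lam| < 1) (b : Fin 2 → ℝ) {c : ℕ → ℝ}
    (hc : ∀ n, |c n| ≤ 1) : Ssum lam b c 1 = (∑' n, c n * lam ^ n) * b 1 := by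
  rw [Ssum, tsum_apply (summable_smul_vb h b hc), ← tsum_mul_right]
  congr 1; funext n
  simp [vb, smul_eq_mul]; ring

lemma Ssum_apply_zero {lam : ℝ} (h : |lam| < 1) (b : Fin 2 → ℝ) {c : ℕ → ℝ}
    (hc : ∀ n, |c n| ≤ 1) :
    Ssum lam b c 0 = (∑' n, c n * lam ^ n) * b 0
      + (∑' n, c n * ((n : ℝ) * lam ^ (n - 1))) * b 1 := by
  rw [Ssum, tsum_apply (summable_smul_vb h b hc), ← tsum_mul_right, ← tsum_mul_right,
    ← Summable.tsum_add ((summable_coeff h hc).mul_right _) ((summable_dcoeff h hc).mul_right _)]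
  congr 1; funext n
  simp [vb, smul_eq_mul]; ring

lemma abs_le_one_of_memB {c : ℕ → ℝ} (hc : memB c) : ∀ n, |c n| ≤ 1 := by
  intro n
  cases n with
  | zero => simp [hc.1]
  | succ m =>
      rcases hc.2 (m + 1) (by omega) with h | h | h <;> simp [h]

lemma Ssum_sub {lam : ℝ} (h : |lam| < 1) (b : Fin 2 → ℝ) {a a' : ℕ → ℝ}
    (ha : ∀ n, |a n| ≤ 1) (ha' : ∀ n, |a' n| ≤ 1) :
    Ssum lam b a - Ssum lam b a' = Ssum lam b (fun n => a n - a' n) := by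
  rw [Ssum, Ssum, Ssum, ← Summable.tsum_sub (summable_smul_vb h b ha) (summable_smul_vb h b ha')]
  congr 1; funext n; rw [← sub_smul]

/-- The intersection condition. -/
def Icond (lam : ℝ) (b : Fin 2 → ℝ) : Prop :=
  ∃ a ∈ Aset, ∃ a' ∈ Aset,
    (!![lam, 1; 0, lam]).mulVec (Ssum lam b a) + b = (!![lam, 1; 0, lam]).mulVec (Ssum lam b a')

theorem Icond_of_memB {lam : ℝ} (h : |lam| < 1) (b : Fin 2 → ℝ) {c : ℕ → ℝ}
    (hc : memB c) (hf : seriesFun c lam = 0) (hf' : deriv (seriesFun c) lam = 0) :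
    Icond lam b := by
  have hc1 := abs_le_one_of_memB hc
  have hsum0 : (∑' n, c n * lam ^ n) = 0 := hf
  have hsum1 : (∑' n, c n * ((n : ℝ) * lam ^ (n - 1))) = 0 := by
    rw [← deriv_seriesFun h hc1]; exact hf'
  have hS0 : Ssum lam b c = 0 := by
    funext i
    fin_cases i
    · rw [show ((⟨0, by norm_num⟩ : Fin 2)) = (0 : Fin 2) from rfl, Ssum_apply_zero h b hc1,
        hsum0, hsum1]; simp
    · rw [show ((⟨1, by norm_num⟩ : Fin 2)) = (1 : Fin 2) from rfl, Ssum_apply_one h b hc1,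
        hsum0]; simp
  have hshift := Ssum_shift h b hc1
  rw [hS0, hc.1, one_smul] at hshift
  -- b + T (Ssum shift) = 0
  refine ⟨fun n => if c (n + 1) = 1 then 1 else 0, fun n => by dsimp only; split <;> simp,
    fun n => if c (n + 1) = -1 then 1 else 0, fun n => by dsimp only; split <;> simp, ?_⟩
  have hdiff : (fun n => (if c (n + 1) = 1 then (1:ℝ) else 0) - (if c (n + 1) = -1 then 1 else 0))
      = fun n => c (n + 1) := by
    funext n
    rcases hc.2 (n + 1) (by omega) with h' | h' | h' <;> rw [h'] <;> norm_num
  have ha : ∀ n, |(if c (n + 1) = 1 then (1:ℝ) else 0)| ≤ 1 := fun n => by split <;> simp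
  have ha' : ∀ n, |(if c (n + 1) = -1 then (1:ℝ) else 0)| ≤ 1 := fun n => by split <;> simp
  have key : Ssum lam b (fun n => (if c (n + 1) = 1 then (1:ℝ) else 0))
      - Ssum lam b (fun n => (if c (n + 1) = -1 then (1:ℝ) else 0))
      = Ssum lam b (fun n => c (n + 1)) := by
    rw [Ssum_sub h b ha ha', hdiff]
  have : (!![lam, 1; 0, lam]).mulVec (Ssum lam b (fun n => c (n + 1))) = -b := by
    have := hshift.symm
    linear_combination (norm := module) this
  have h2 : (!![lam, 1; 0, lam]).mulVec (Ssum lam b (fun n => if c (n + 1) = 1 then (1:ℝ) else 0))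
      - (!![lam, 1; 0, lam]).mulVec (Ssum lam b (fun n => if c (n + 1) = -1 then (1:ℝ) else 0)) = -b := by
    rw [← Matrix.mulVec_sub, key]; exact this
  linear_combination (norm := module) h2

theorem memB_of_Icond {lam : ℝ} (h : |lam| < 1) {b : Fin 2 → ℝ} (hb : b 1 ≠ 0)
    (hI : Icond lam b) :
    ∃ c, memB c ∧ seriesFun c lam = 0 ∧ deriv (seriesFun c) lam = 0 := by
  obtain ⟨a, ha, a', ha', heq⟩ := hI
  set d : ℕ → ℝ := fun n => a n - a' n with hd
  have hd1 : ∀ n, |d n| ≤ 1 := by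
    intro n
    rcases ha n with h1 | h1 <;> rcases ha' n with h2 | h2 <;> simp [hd, h1, h2]
  set c : ℕ → ℝ := consSeq 1 d with hcdef
  have hmemB : memB c := by
    constructor
    · simp [hcdef, consSeq]
    · intro n hn
      have hn0 : n ≠ 0 := by omega
      rcases ha (n - 1) with h1 | h1 <;> rcases ha' (n - 1) with h2 | h2 <;>
        simp [hcdef, consSeq, hn0, hd, h1, h2]
  have hc1 := abs_le_one_of_memB hmemB
  have hS0 : Ssum lam b c = 0 := by
    rw [hcdef, Ssum_cons h b hd1 1 (by norm_num), one_smul, ← Ssum_sub h b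
      (abs_le_one_of_mem_Aset ha) (abs_le_one_of_mem_Aset ha'), Matrix.mulVec_sub]
    linear_combination (norm := module) heq
  have h1 : (∑' n, c n * lam ^ n) * b 1 = 0 := by
    rw [← Ssum_apply_one h b hc1, hS0]; rfl
  have hf : seriesFun c lam = 0 := by
    have := mul_eq_zero.mp h1
    rcases this with h' | h'
    · exact h'
    · exact absurd h' hb
  have h0 : (∑' n, c n * ((n : ℝ) * lam ^ (n - 1))) * b 1 = 0 := by
    have := congrFun hS0 0
    rw [Ssum_apply_zero h b hc1] at this
    have hz : (∑' n, c n * lam ^ n) = 0 := hf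
    rw [hz, zero_mul, zero_add] at this
    exact this
  refine ⟨c, hmemB, hf, ?_⟩
  rw [deriv_seriesFun h hc1]
  rcases mul_eq_zero.mp h0 with h' | h'
  · exact h'
  · exact absurd h' hb

def Eset (lam : ℝ) (b : Fin 2 → ℝ) : Set (Fin 2 → ℝ) := Ssum lam b '' Aset

lemma isCompact_Eset {lam : ℝ} (h : |lam| < 1) (b : Fin 2 → ℝ) : IsCompact (Eset lam b) :=
  isCompact_Aset.image_of_continuousOn (continuousOn_Ssum h b)

lemma norm_le_of_mem_Eset {lam : ℝ} (h : |lam| < 1) (b : Fin 2 → ℝ) {z : Fin 2 → ℝ}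
    (hz : z ∈ Eset lam b) : ‖z‖ ≤ ∑' n, cc lam n * ‖b‖ := by
  obtain ⟨a, ha, rfl⟩ := hz
  exact norm_Ssum_le h b (abs_le_one_of_mem_Aset ha)

lemma consSeq_mem_Aset {t : ℝ} (ht : t = 0 ∨ t = 1) {a : ℕ → ℝ} (ha : a ∈ Aset) :
    consSeq t a ∈ Aset := by
  intro n
  cases n with
  | zero => simpa [consSeq] using ht
  | succ m => simpa [consSeq] using ha m

lemma Gmap_mem_Eset {lam : ℝ} (h : |lam| < 1) (b : Fin 2 → ℝ) {t : ℝ} (ht : t = 0 ∨ t = 1)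
    {z : Fin 2 → ℝ} (hz : z ∈ Eset lam b) :
    t • b + (!![lam, 1; 0, lam]).mulVec z ∈ Eset lam b := by
  obtain ⟨a, ha, rfl⟩ := hz
  have ht1 : |t| ≤ 1 := by rcases ht with h' | h' <;> simp [h']
  exact ⟨consSeq t a, consSeq_mem_Aset ht ha,
    Ssum_cons h b (abs_le_one_of_mem_Aset ha) t ht1⟩

lemma Eset_decomp {lam : ℝ} (h : |lam| < 1) (b : Fin 2 → ℝ) {x : Fin 2 → ℝ}
    (hx : x ∈ Eset lam b) :
    ∃ t : ℝ, (t = 0 ∨ t = 1) ∧ ∃ x' ∈ Eset lam b,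
      x = t • b + (!![lam, 1; 0, lam]).mulVec x' := by
  obtain ⟨a, ha, rfl⟩ := hx
  refine ⟨a 0, ha 0, Ssum lam b (fun n => a (n + 1)), ?_, ?_⟩
  · exact ⟨fun n => a (n + 1), fun n => ha (n + 1), rfl⟩
  · exact Ssum_shift h b (abs_le_one_of_mem_Aset ha)

/-- level-`n` chain relation on `E`. -/
def chainRel (lam : ℝ) (b : Fin 2 → ℝ) (n : ℕ) (z w : Fin 2 → ℝ) : Prop :=
  z ∈ Eset lam b ∧ w ∈ Eset lam b ∧
    ∃ u v, u ∈ Eset lam b ∧ v ∈ Eset lam b ∧ w - z = vb lam (v - u) n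

lemma vb_neg_arg (lam : ℝ) (d : Fin 2 → ℝ) (n : ℕ) : vb lam (-d) n = -(vb lam d n) := by
  funext i; fin_cases i <;> simp [vb] <;> ring

lemma chainRel_symm (lam : ℝ) (b : Fin 2 → ℝ) (n : ℕ) : Symmetric (chainRel lam b n) := by
  rintro z w ⟨hz, hw, u, v, hu, hv, hd⟩
  refine ⟨hw, hz, v, u, hv, hu, ?_⟩
  have : u - v = -(v - u) := by abel
  rw [this, vb_neg_arg, ← hd]; abel

lemma chain_lemma {lam : ℝ} (h : |lam| < 1) (b : Fin 2 → ℝ) (hI : Icond lam b) :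
    ∀ n, ∀ x ∈ Eset lam b, ∀ y ∈ Eset lam b, Relation.ReflTransGen (chainRel lam b n) x y := by
  obtain ⟨a, ha, a', ha', heq⟩ := hI
  set T := !![lam, 1; 0, lam] with hT
  set E := Eset lam b with hE
  set p := T.mulVec (Ssum lam b a') with hp
  have hq0 : Ssum lam b a' ∈ E := ⟨a', ha', rfl⟩
  have hq1 : Ssum lam b a ∈ E := ⟨a, ha, rfl⟩
  have hp0 : (0:ℝ) • b + T.mulVec (Ssum lam b a') = p := by rw [zero_smul, zero_add]
  have hp1 : (1:ℝ) • b + T.mulVec (Ssum lam b a) = p := by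
    rw [one_smul, ← heq]; abel
  have hlift : ∀ (t : ℝ), (t = 0 ∨ t = 1) → ∀ n z w, chainRel lam b n z w →
      chainRel lam b (n + 1) (t • b + T.mulVec z) (t • b + T.mulVec w) := by
    rintro t ht n z w ⟨hz, hw, u, v, hu, hv, hd⟩
    refine ⟨Gmap_mem_Eset h b ht hz, Gmap_mem_Eset h b ht hw, u, v, hu, hv, ?_⟩
    have : (t • b + T.mulVec w) - (t • b + T.mulVec z) = T.mulVec (w - z) := by
      rw [Matrix.mulVec_sub]; abel
    rw [this, hd, ← vb_succ]
  intro n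
  induction n with
  | zero =>
      intro x hx y hy
      apply Relation.ReflTransGen.single
      refine ⟨hx, hy, x, y, hx, hy, ?_⟩
      funext i; fin_cases i <;> simp [vb]
  | succ n ih =>
      intro x hx y hy
      have key : ∀ z ∈ E, Relation.ReflTransGen (chainRel lam b (n + 1)) z p := by
        intro z hz
        obtain ⟨t, ht, z', hz', hze⟩ := Eset_decomp h b hz
        have hq : ∃ q ∈ E, t • b + T.mulVec q = p := by
          rcases ht with h' | h'
          · exact ⟨Ssum lam b a', hq0, by rw [h']; exact hp0⟩
          · exact ⟨Ssum lam b a, hq1, by rw [h']; exact hp1⟩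
        obtain ⟨q, hqE, hGq⟩ := hq
        have : Relation.ReflTransGen (chainRel lam b (n + 1)) ((fun w => t • b + T.mulVec w) z')
            ((fun w => t • b + T.mulVec w) q) := Relation.ReflTransGen.lift (fun w => t • b + T.mulVec w)
          (fun u v r => hlift t ht n u v r) _ _ (ih z' hz' q hqE)
        have e1 : (fun w => t • b + T.mulVec w) z' = z := hze.symm
        have e2 : (fun w => t • b + T.mulVec w) q = p := hGq
        rw [e1, e2] at this
        exact this
      exact (key x hx).trans ((@Relation.ReflTransGen.stdSymm _ _
        ⟨fun u v r => chainRel_symm lam b (n+1) r⟩).symm _ _ (key y hy))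

lemma tsum_cc_nonneg (lam : ℝ) (b : Fin 2 → ℝ) : 0 ≤ ∑' n, cc lam n * ‖b‖ :=
  tsum_nonneg fun n => mul_nonneg (cc_nonneg lam n) (norm_nonneg b)

lemma isPreconnected_Eset {lam : ℝ} (h : |lam| < 1) (b : Fin 2 → ℝ) (hI : Icond lam b) :
    IsPreconnected (Eset lam b) := by
  set E := Eset lam b with hE
  set M : ℝ := ∑' n, cc lam n * ‖b‖ with hM
  have hM0 : 0 ≤ M := tsum_cc_nonneg lam b
  rintro U V hU hV hcover ⟨x, hxE, hxU⟩ ⟨y, hyE, hyV⟩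
  by_contra hne
  have hempty : E ∩ (U ∩ V) = ∅ := not_nonempty_iff_eq_empty.mp hne
  set K1 := E ∩ U with hK1
  set K2 := E ∩ V with hK2
  have hsub : ∀ z ∈ E, z ∈ K1 ∨ z ∈ K2 := by
    intro z hz
    rcases hcover hz with h' | h'
    · exact Or.inl ⟨hz, h'⟩
    · exact Or.inr ⟨hz, h'⟩
  have hdisj : ∀ z, z ∈ K1 → z ∈ K2 → False := by
    rintro z ⟨hzE, hzU⟩ ⟨_, hzV⟩
    have : z ∈ E ∩ (U ∩ V) := ⟨hzE, hzU, hzV⟩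
    rw [hempty] at this; exact this
  have hK1c : IsCompact K1 := by
    have : K1 = E ∩ Vᶜ := by
      apply Set.eq_of_subset_of_subset
      · rintro z ⟨hzE, hzU⟩
        exact ⟨hzE, fun hzV => hdisj z ⟨hzE, hzU⟩ ⟨hzE, hzV⟩⟩
      · rintro z ⟨hzE, hzV⟩
        rcases hcover hzE with h' | h'
        · exact ⟨hzE, h'⟩
        · exact absurd h' hzV
    rw [this]
    exact (isCompact_Eset h b).inter_right hV.isClosed_compl
  have hK2cl : IsClosed K2 := by
    have : K2 = E ∩ Uᶜ := by
      apply Set.eq_of_subset_of_subset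
      · rintro z ⟨hzE, hzV⟩
        exact ⟨hzE, fun hzU => hdisj z ⟨hzE, hzU⟩ ⟨hzE, hzV⟩⟩
      · rintro z ⟨hzE, hzU⟩
        rcases hcover hzE with h' | h'
        · exact absurd h' hzU
        · exact ⟨hzE, h'⟩
    rw [this]
    exact ((isCompact_Eset h b).inter_right hU.isClosed_compl).isClosed
  have hK2ne : K2.Nonempty := ⟨y, hyE, hyV⟩
  -- minimal distance δ
  obtain ⟨z0, hz0, hmin⟩ := hK1c.exists_isMinOn ⟨x, hxE, hxU⟩
    (continuous_infDist_pt K2).continuousOn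
  set δ := infDist z0 K2 with hδ
  have hδpos : 0 < δ :=
    (hK2cl.notMem_iff_infDist_pos hK2ne).mp (fun hin => hdisj z0 hz0 hin)
  have hdist : ∀ z ∈ K1, ∀ w ∈ K2, δ ≤ dist z w := by
    intro z hz w hw
    exact le_trans (hmin hz) (infDist_le_dist_of_mem hw)
  -- choose n with small gaps
  have hQpos : 0 < δ / (2 * M + 1) := by positivity
  obtain ⟨n, hn⟩ := ((cc_tendsto h).eventually_lt_const hQpos).exists
  -- gaps at level n are < δ
  have hgap : ∀ z w, chainRel lam b n z w → dist z w < δ := by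
    rintro z w ⟨hz, hw, u, v, hu, hv, hd⟩
    have huv : ‖v - u‖ ≤ 2 * M := by
      calc ‖v - u‖ ≤ ‖v‖ + ‖u‖ := norm_sub_le v u
        _ ≤ M + M := add_le_add (norm_le_of_mem_Eset h b hv) (norm_le_of_mem_Eset h b hu)
        _ = 2 * M := by ring
    calc dist z w = ‖w - z‖ := by rw [dist_eq_norm, norm_sub_rev]
      _ = ‖vb lam (v - u) n‖ := by rw [hd]
      _ ≤ cc lam n * ‖v - u‖ := norm_vb_le lam _ n
      _ ≤ cc lam n * (2 * M + 1) := by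
          apply mul_le_mul_of_nonneg_left _ (cc_nonneg lam n)
          linarith
      _ < (δ / (2 * M + 1)) * (2 * M + 1) := by
          apply mul_lt_mul_of_pos_right hn; positivity
      _ = δ := div_mul_cancel₀ δ (by positivity)
  -- chains stay in K1
  have hstay : ∀ w, Relation.ReflTransGen (chainRel lam b n) x w → w ∈ K1 := by
    intro w hw
    induction hw with
    | refl => exact ⟨hxE, hxU⟩
    | tail _ hrel ih =>
        rename_i bb cb hsteps
        rcases hsub cb hrel.2.1 with h' | h'
        · exact h'
        · exact absurd (hdist bb ih cb h') (not_le.mpr (hgap bb cb hrel))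
  exact hdisj y (hstay y (chain_lemma h b hI n x hxE y hyE)) ⟨hyE, hyV⟩

end auxStmt2

/-- For `λ ∈ (-1,1)`, `T = [[λ,1],[0,λ]]` and `b = (b₁,b₂)` with `b₂ ≠ 0`,
the attractor `E = { ∑ aₙ Tⁿ b : aₙ ∈ {0,1} }` is connected iff some `f ∈ ℬ` satisfies
`f(λ) = f'(λ) = 0`. -/
theorem stmt2 (lam : ℝ) (hlam : lam ∈ Set.Ioo (-1 : ℝ) 1) (b : Fin 2 → ℝ) (hb : b 1 ≠ 0) :
    IsConnected {p : Fin 2 → ℝ | ∃ a : ℕ → ℝ, (∀ n, a n = 0 ∨ a n = 1) ∧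
        p = ∑' n, a n • ((!![lam, 1; 0, lam] ^ n).mulVec b)} ↔
      ∃ c : ℕ → ℝ, memB c ∧ seriesFun c lam = 0 ∧ deriv (seriesFun c) lam = 0 := by
  have h : |lam| < 1 := abs_lt.mpr ⟨hlam.1, hlam.2⟩
  have hset : {p : Fin 2 → ℝ | ∃ a : ℕ → ℝ, (∀ n, a n = 0 ∨ a n = 1) ∧
      p = ∑' n, a n • ((!![lam, 1; 0, lam] ^ n).mulVec b)} = Eset lam b := by
    ext p
    constructor
    · rintro ⟨a, ha, rfl⟩
      refine ⟨a, ha, ?_⟩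
      rw [Ssum]
      congr 1; funext n; rw [pow_mulVec]
    · rintro ⟨a, ha, rfl⟩
      refine ⟨a, ha, ?_⟩
      rw [Ssum]
      congr 1; funext n; rw [pow_mulVec]
  rw [hset]
  have hEne : (Eset lam b).Nonempty :=
    ⟨Ssum lam b (fun _ => 0), ⟨fun _ => 0, fun n => Or.inl rfl, rfl⟩⟩
  constructor
  · -- connected → exists c
    intro hconn
    by_contra hc
    -- Icond fails
    have hI : ¬ Icond lam b := fun hI => hc (memB_of_Icond h hb hI)
    -- split E into two disjoint compact pieces
    set T := !![lam, 1; 0, lam] with hT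
    set C := (fun z => T.mulVec z) '' Eset lam b with hC
    set D := (fun z => b + T.mulVec z) '' Eset lam b with hD
    have hTcont : Continuous fun z : Fin 2 → ℝ => T.mulVec z := (Tc lam).continuous
    have hCc : IsCompact C := (isCompact_Eset h b).image hTcont
    have hDc : IsCompact D := (isCompact_Eset h b).image (continuous_const.add hTcont)
    have hCE : C ⊆ Eset lam b := by
      rintro w ⟨z, hz, rfl⟩
      have := Gmap_mem_Eset h b (Or.inl rfl) hz
      rwa [zero_smul, zero_add] at this
    have hDE : D ⊆ Eset lam b := by
      rintro w ⟨z, hz, rfl⟩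
      have := Gmap_mem_Eset h b (Or.inr rfl) hz
      rwa [one_smul] at this
    have hCD : Disjoint C D := by
      rw [Set.disjoint_left]
      rintro w ⟨z1, ⟨a1, ha1, rfl⟩, hw1⟩ ⟨z2, ⟨a2, ha2, rfl⟩, hw2⟩
      exact hI ⟨a2, ha2, a1, ha1, by rw [← hw2] at hw1; linear_combination (norm := module) -hw1⟩
    have hcover : Eset lam b ⊆ C ∪ D := by
      intro x hx
      obtain ⟨t, ht, x', hx', hxe⟩ := Eset_decomp h b hx
      rcases ht with h' | h'
      · left; exact ⟨x', hx', by rw [hxe, h', zero_smul, zero_add]⟩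
      · right; exact ⟨x', hx', by rw [hxe, h', one_smul]⟩
    obtain ⟨U, V, hU, hV, hCU, hDV, hUV⟩ :=
      SeparatedNhds.of_isCompact_isCompact hCc hDc hCD
    obtain ⟨w1, hw1⟩ : C.Nonempty := hEne.image _
    obtain ⟨w2, hw2⟩ : D.Nonempty := hEne.image _
    obtain ⟨z, hzE, hzU, hzV⟩ := hconn.isPreconnected U V hU hV
      (hcover.trans (Set.union_subset_union hCU hDV))
      ⟨w1, hCE hw1, hCU hw1⟩ ⟨w2, hDE hw2, hDV hw2⟩
    exact Set.disjoint_left.mp hUV hzU hzV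
  · rintro ⟨c, hc, hf, hf'⟩
    exact ⟨hEne, isPreconnected_Eset h b (Icond_of_memB h b hc hf hf')⟩
end
end

section
/- For every γ ∈ (1/2, α₂) there is exactly one function f ∈ ℬ_{[−1,1]} with f(γ) = f(φ(γ)) = 0. Moreover this f is a (*)-function, i.e. f = h_k^{(a)} for some integer k ≥ 1 and some a ∈ [−1,1], and it satisfies f′(γ) < 0 and f′(φ(γ)) > 0. -/
open Set Filter Topology

noncomputable section

namespace Stmt5Aux

lemma memBI_abs {a : ℕ → ℝ} (ha : memBI a) (n : ℕ) : |a n| ≤ 1 := by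
  rcases n with _ | m
  · rw [ha.1]; norm_num
  · have h := ha.2 (m + 1) (Nat.le_add_left 1 m)
    rw [abs_le]; exact ⟨h.1, h.2⟩

lemma summable_coeff {a : ℕ → ℝ} (ha : ∀ n, |a n| ≤ 1) {x : ℝ} (hx : |x| < 1) :
    Summable (fun n => a n * x ^ n) := by
  apply Summable.of_norm
  apply Summable.of_nonneg_of_le (fun n => norm_nonneg _) (fun n => ?_)
    (summable_geometric_of_lt_one (abs_nonneg x) hx)
  have : ‖a n * x ^ n‖ = |a n| * |x| ^ n := by
    rw [norm_mul, norm_pow]; rfl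
  rw [this]
  calc |a n| * |x| ^ n ≤ 1 * |x| ^ n := by
        exact mul_le_mul_of_nonneg_right (ha n) (pow_nonneg (abs_nonneg x) n)
    _ = |x| ^ n := one_mul _

/-- coefficient sequence of the `(*)`-function. -/
def aseq (k : ℕ) (a : ℝ) : ℕ → ℝ := fun n =>
  if n = 0 then 1 else if n < k then -1 else if n = k then a else 1

lemma aseq_memBI {k : ℕ} {a : ℝ} (ha : a ∈ Set.Icc (-1 : ℝ) 1) : memBI (aseq k a) := by
  constructor
  · simp [aseq]
  · intro n hn
    have hn0 : n ≠ 0 := by omega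
    by_cases h1 : n < k
    · simp [aseq, hn0, h1]
    · by_cases h2 : n = k
      · have hk0 : k ≠ 0 := h2 ▸ hn0
        simpa [aseq, hn0, h1, h2, hk0] using ha
      · simp [aseq, hn0, h1, h2]

lemma aseq_abs {k : ℕ} {a : ℝ} (ha : a ∈ Set.Icc (-1 : ℝ) 1) (n : ℕ) : |aseq k a n| ≤ 1 :=
  memBI_abs (aseq_memBI ha) n

/-- `P_{k,a}(x) = (1-x) h_k^{(a)}(x)`. -/
def Pfun (k : ℕ) (a : ℝ) (x : ℝ) : ℝ := 1 - 2*x + (1+a)*x^k + (1-a)*x^(k+1)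

lemma Pfun_one (k : ℕ) (a : ℝ) : Pfun k a 1 = 1 := by
  simp only [Pfun, one_pow]; ring

lemma Pfun_param_mono {k : ℕ} {a a' x : ℝ} (h : a ≤ a') (hx0 : 0 ≤ x) (hx1 : x ≤ 1) :
    Pfun k a x ≤ Pfun k a' x := by
  have h1 : Pfun k a' x - Pfun k a x = (a' - a) * (x^k * (1 - x)) := by
    simp only [Pfun, pow_succ]; ring
  nlinarith [mul_nonneg (mul_nonneg (sub_nonneg.2 h) (pow_nonneg hx0 k)) (sub_nonneg.2 hx1)]

lemma Pfun_param_strictMono {k : ℕ} {a a' x : ℝ} (h : a < a') (hx0 : 0 < x) (hx1 : x < 1) :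
    Pfun k a x < Pfun k a' x := by
  have h1 : Pfun k a' x - Pfun k a x = (a' - a) * (x^k * (1 - x)) := by
    simp only [Pfun, pow_succ]; ring
  nlinarith [mul_pos (mul_pos (sub_pos.2 h) (pow_pos hx0 k)) (sub_pos.2 hx1)]

lemma Pfun_half_pos {k : ℕ} {a : ℝ} (ha : a ∈ Set.Icc (-1 : ℝ) 1) :
    0 < Pfun k a (1/2 : ℝ) := by
  have h2 : (0:ℝ) < (1/2:ℝ)^k := by positivity
  have h3 : (0:ℝ) < (1/2:ℝ)^(k+1) := by positivity
  rcases lt_or_ge a 1 with h | h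
  · have : 0 < (1 - a) * (1/2:ℝ)^(k+1) := mul_pos (by linarith) h3
    have h4 : 0 ≤ (1 + a) * (1/2:ℝ)^k := mul_nonneg (by linarith [ha.1]) h2.le
    simp only [Pfun]; linarith
  · have ha1 : a = 1 := le_antisymm ha.2 h
    subst ha1
    have : Pfun k 1 (1/2:ℝ) = 2 * (1/2:ℝ)^k := by
      simp only [Pfun, pow_succ]; ring
    rw [this]; positivity
lemma Pfun_small_pos {k : ℕ} {a : ℝ} (ha : a ∈ Set.Icc (-1 : ℝ) 1) {x : ℝ}
    (hx0 : 0 ≤ x) (hx : x < 1/2) : 0 < Pfun k a x := by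
  have h1 : 0 ≤ (1 + a) * x^k := mul_nonneg (by linarith [ha.1]) (pow_nonneg hx0 k)
  have h2 : 0 ≤ (1 - a) * x^(k+1) := mul_nonneg (by linarith [ha.2]) (pow_nonneg hx0 (k+1))
  simp only [Pfun]; linarith

lemma Pfun_succ_one (k : ℕ) : Pfun (k+1) 1 = Pfun k (-1) := by
  funext x; simp only [Pfun, pow_succ]; ring

lemma hstar_eq_div {k : ℕ} (hk : 1 ≤ k) {a x : ℝ} (hx : x ≠ 1) :
    hstar k a x = Pfun k a x / (1 - x) := by
  have hx1 : (1:ℝ) - x ≠ 0 := by intro h; apply hx; linarith [h]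
  have hx2 : x - 1 ≠ 0 := sub_ne_zero.mpr hx
  rw [hstar, Pfun, geom_sum_Ico hx hk]
  field_simp
  ring

end Stmt5Aux
namespace Stmt5Aux

lemma seriesFun_aseq_eq {k : ℕ} (hk : 1 ≤ k) {a : ℝ} (ha : a ∈ Set.Icc (-1:ℝ) 1)
    {x : ℝ} (hx : x ∈ Set.Ioo (-1:ℝ) 1) :
    seriesFun (aseq k a) x = hstar k a x := by
  have hax : |x| < 1 := abs_lt.mpr ⟨hx.1, hx.2⟩
  have hsum : Summable (fun n => aseq k a n * x ^ n) := summable_coeff (aseq_abs ha) hax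
  have hsplit := Summable.sum_add_tsum_nat_add (f := fun n => aseq k a n * x ^ n) (k+1) hsum
  have htail : (∑' i : ℕ, aseq k a (i + (k+1)) * x ^ (i + (k+1)))
      = x^(k+1) * (1 - x)⁻¹ := by
    have h1 : ∀ i : ℕ, aseq k a (i + (k+1)) * x ^ (i + (k+1)) = x^(k+1) * x ^ i := by
      intro i
      have h0 : ¬ (i + (k+1) = 0) := by omega
      have h1 : ¬ (i + (k+1) < k) := by omega
      have h2 : ¬ (i + (k+1) = k) := by omega
      simp only [aseq, if_neg h0, if_neg h1, if_neg h2, one_mul]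
      rw [pow_add]; ring
    rw [tsum_congr h1, tsum_mul_left, tsum_geometric_of_norm_lt_one (by rwa [Real.norm_eq_abs])]
  have hfront : (∑ i ∈ Finset.range (k+1), aseq k a i * x ^ i)
      = 1 - (∑ i ∈ Finset.Ico 1 k, x ^ i) + a * x^k := by
    rw [Finset.range_eq_Ico, Finset.sum_eq_sum_Ico_succ_bot (by omega),
      Finset.sum_Ico_succ_top hk]
    have e0 : aseq k a 0 * x ^ 0 = 1 := by simp [aseq]
    have ek : aseq k a k * x ^ k = a * x ^ k := by
      have hk0 : ¬ (k = 0) := by omega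
      simp [aseq, hk0]
    have emid : (∑ i ∈ Finset.Ico 1 k, aseq k a i * x ^ i)
        = -∑ i ∈ Finset.Ico 1 k, x ^ i := by
      rw [← Finset.sum_neg_distrib]
      apply Finset.sum_congr rfl
      intro i hi
      rw [Finset.mem_Ico] at hi
      have h0 : ¬ (i = 0) := by omega
      simp [aseq, h0, hi.2]
    rw [e0, ek, emid]; ring
  rw [seriesFun, ← hsplit, htail, hfront, hstar, div_eq_mul_inv]

lemma seriesFun_aseq_eq_ratio {k : ℕ} (hk : 1 ≤ k) {a : ℝ} (ha : a ∈ Set.Icc (-1:ℝ) 1)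
    {x : ℝ} (hx : x ∈ Set.Ioo (-1:ℝ) 1) :
    seriesFun (aseq k a) x = Pfun k a x / (1 - x) := by
  rw [seriesFun_aseq_eq hk ha hx, hstar_eq_div hk (ne_of_lt hx.2)]

/-- derivative of `Pfun`. -/
def Pd (k : ℕ) (a : ℝ) (x : ℝ) : ℝ := (1+a)*((k:ℝ)*x^(k-1)) + (1-a)*(((k:ℝ)+1)*x^k) - 2

lemma hasDerivAt_Pfun (k : ℕ) (a x : ℝ) : HasDerivAt (Pfun k a) (Pd k a x) x := by
  have h : HasDerivAt (fun y : ℝ => 1 - 2*y + (1+a)*y^k + (1-a)*y^(k+1))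
      (0 - 2*1 + (1+a)*((k:ℝ)*x^(k-1)) + (1-a)*(((k+1:ℕ):ℝ)*x^(k+1-1))) x :=
    (((hasDerivAt_const x (1:ℝ)).sub ((hasDerivAt_id x).const_mul 2)).add
      ((hasDerivAt_pow k x).const_mul (1+a))).add ((hasDerivAt_pow (k+1) x).const_mul (1-a))
  have h2 : (0 - 2*1 + (1+a)*((k:ℝ)*x^(k-1)) + (1-a)*(((k+1:ℕ):ℝ)*x^(k+1-1))) = Pd k a x := by
    simp only [Pd, Nat.add_sub_cancel]
    push_cast
    ring
  rw [h2] at h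
  exact h

/-- second derivative of `Pfun`. -/
def Pd2 (k : ℕ) (a : ℝ) (x : ℝ) : ℝ :=
  (1+a)*((k:ℝ)*(((k-1:ℕ):ℝ)*x^(k-1-1))) + (1-a)*(((k:ℝ)+1)*((k:ℝ)*x^(k-1)))

lemma hasDerivAt_Pd (k : ℕ) (a x : ℝ) : HasDerivAt (Pd k a) (Pd2 k a x) x := by
  have h : HasDerivAt (fun y : ℝ => (1+a)*((k:ℝ)*y^(k-1)) + (1-a)*(((k:ℝ)+1)*y^k) - 2)
      ((1+a)*((k:ℝ)*(((k-1:ℕ):ℝ)*x^(k-1-1))) + (1-a)*(((k:ℝ)+1)*(((k:ℕ):ℝ)*x^(k-1))) - 0) x :=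
    ((((hasDerivAt_pow (k-1) x).const_mul (k:ℝ)).const_mul (1+a)).add
      (((hasDerivAt_pow k x).const_mul ((k:ℝ)+1)).const_mul (1-a))).sub (hasDerivAt_const x 2)
  have h2 : ((1+a)*((k:ℝ)*(((k-1:ℕ):ℝ)*x^(k-1-1))) + (1-a)*(((k:ℝ)+1)*(((k:ℕ):ℝ)*x^(k-1))) - 0)
      = Pd2 k a x := by
    simp only [Pd2]; ring
  rw [h2] at h
  exact h

lemma deriv_Pfun (k : ℕ) (a : ℝ) : deriv (Pfun k a) = Pd k a :=
  funext fun x => (hasDerivAt_Pfun k a x).deriv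

lemma deriv_Pd (k : ℕ) (a : ℝ) : deriv (Pd k a) = Pd2 k a :=
  funext fun x => (hasDerivAt_Pd k a x).deriv

lemma continuous_Pfun (k : ℕ) (a : ℝ) : Continuous (Pfun k a) := by
  unfold Pfun; fun_prop

lemma continuous_Pd (k : ℕ) (a : ℝ) : Continuous (Pd k a) := by
  unfold Pd; fun_prop

lemma Pd2_pos {k : ℕ} (hk : 1 ≤ k) {a x : ℝ} (ha1 : -1 ≤ a) (ha2 : a < 1) (hx : 0 < x) :
    0 < Pd2 k a x := by
  have h1 : 0 ≤ (1+a)*((k:ℝ)*(((k-1:ℕ):ℝ)*x^(k-1-1))) := by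
    apply mul_nonneg (by linarith)
    positivity
  have h2 : 0 < (1-a)*(((k:ℝ)+1)*((k:ℝ)*x^(k-1))) := by
    have hk' : (0:ℝ) < (k:ℝ) := by exact_mod_cast hk
    have : (0:ℝ) < 1 - a := by linarith
    positivity
  simp only [Pd2]; linarith

lemma strictConvex_Pfun {k : ℕ} (hk : 1 ≤ k) {a : ℝ} (ha1 : -1 ≤ a) (ha2 : a < 1) :
    StrictConvexOn ℝ (Set.Icc (0:ℝ) 1) (Pfun k a) := by
  apply strictConvexOn_of_deriv2_pos (convex_Icc 0 1) (continuous_Pfun k a).continuousOn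
  intro x hx
  rw [interior_Icc] at hx
  have h : deriv^[2] (Pfun k a) x = Pd2 k a x := by
    rw [show deriv^[2] (Pfun k a) = deriv (deriv (Pfun k a)) from rfl, deriv_Pfun, deriv_Pd]
  rw [h]
  exact Pd2_pos hk ha1 ha2 hx.1

lemma strictMono_Pd {k : ℕ} (hk : 1 ≤ k) {a : ℝ} (ha1 : -1 ≤ a) (ha2 : a < 1) :
    StrictMonoOn (Pd k a) (Set.Icc (0:ℝ) 1) := by
  apply strictMonoOn_of_deriv_pos (convex_Icc 0 1) (continuous_Pd k a).continuousOn
  intro x hx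
  rw [interior_Icc] at hx
  rw [deriv_Pd]
  exact Pd2_pos hk ha1 ha2 hx.1

lemma hasDerivAt_ratio (k : ℕ) (a : ℝ) {x : ℝ} (hx : x ≠ 1) :
    HasDerivAt (fun y => Pfun k a y / (1 - y))
      ((Pd k a x * (1 - x) + Pfun k a x) / (1 - x)^2) x := by
  have h1 : (1:ℝ) - x ≠ 0 := sub_ne_zero.mpr (Ne.symm hx)
  have h := (hasDerivAt_Pfun k a x).div
    ((hasDerivAt_const x (1:ℝ)).sub (hasDerivAt_id' x)) h1
  exact h.congr_deriv (by simp only [Pi.sub_apply]; ring)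

lemma seriesFun_aseq_eventually {k : ℕ} (hk : 1 ≤ k) {a : ℝ} (ha : a ∈ Set.Icc (-1:ℝ) 1)
    {x : ℝ} (hx : x ∈ Set.Ioo (-1:ℝ) 1) :
    seriesFun (aseq k a) =ᶠ[𝓝 x] fun y => Pfun k a y / (1 - y) := by
  filter_upwards [isOpen_Ioo.mem_nhds hx] with y hy
  exact seriesFun_aseq_eq_ratio hk ha hy

lemma deriv_seriesFun_aseq {k : ℕ} (hk : 1 ≤ k) {a : ℝ} (ha : a ∈ Set.Icc (-1:ℝ) 1)
    {x : ℝ} (hx : x ∈ Set.Ioo (-1:ℝ) 1) :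
    deriv (seriesFun (aseq k a)) x = (Pd k a x * (1 - x) + Pfun k a x) / (1 - x)^2 := by
  rw [(seriesFun_aseq_eventually hk ha hx).deriv_eq]
  exact (hasDerivAt_ratio k a (ne_of_lt hx.2)).deriv

end Stmt5Aux
namespace Stmt5Aux

lemma hasZeros_two_aux {F : ℝ → ℝ} {t x₀ : ℝ} (h : hasZeros F 2 t)
    (huniq : ∀ x, 0 < x → x ≤ t → F x = 0 → x = x₀) : deriv F x₀ = 0 := by
  obtain ⟨s, d, hs, hsum⟩ := h
  have hzero : ∀ x ∈ s, F x = 0 := by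
    intro x hx
    have h0 := (hs x hx).2.2 0 (lt_of_lt_of_le Nat.zero_lt_one (hs x hx).2.1)
    rwa [iteratedDeriv_zero] at h0
  have hsub : s ⊆ {x₀} := by
    intro x hx
    have hmem := (hs x hx).1
    have := huniq x hmem.1 hmem.2 (hzero x hx)
    simp [this]
  rcases Finset.subset_singleton_iff.mp hsub with h0 | h0
  · rw [h0] at hsum; simp at hsum
  · rw [h0] at hsum
    rw [Finset.sum_singleton] at hsum
    have hx₀ : x₀ ∈ s := by rw [h0]; exact Finset.mem_singleton_self x₀
    have h1 := (hs x₀ hx₀).2.2 1 (by omega)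
    rwa [iteratedDeriv_one] at h1

lemma hasZeros_pair {F : ℝ → ℝ} {u v : ℝ} (hu : 0 < u) (huv : u < v)
    (hFu : F u = 0) (hFv : F v = 0) : hasZeros F 2 v := by
  classical
  refine ⟨{u, v}, fun _ => 1, ?_, ?_⟩
  · intro x hx
    rcases Finset.mem_insert.mp hx with h | h
    · subst h
      exact ⟨⟨hu, huv.le⟩, le_refl 1, fun j hj => by
        interval_cases j
        rwa [iteratedDeriv_zero]⟩
    · rw [Finset.mem_singleton] at h
      subst h
      exact ⟨⟨lt_trans hu huv, le_refl _⟩, le_refl 1, fun j hj => by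
        interval_cases j
        rwa [iteratedDeriv_zero]⟩
  · have hne : u ∉ ({v} : Finset ℝ) := by simp [ne_of_lt huv]
    rw [Finset.sum_const, Finset.card_insert_of_notMem hne, Finset.card_singleton]
    simp

section Gamma

variable {γ : ℝ} (hγ : γ ∈ Set.Ioo (1/2 : ℝ) alpha2)

lemma gamma_lt_one (hγ : γ ∈ Set.Ioo (1/2 : ℝ) alpha2) : γ < 1 := by
  set S := {x | x ∈ Set.Ioo (0:ℝ) 1 ∧
    ∃ a, memBI a ∧ seriesFun a x = 0 ∧ deriv (seriesFun a) x = 0} with hS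
  rcases Set.eq_empty_or_nonempty S with h | h
  · exfalso
    have h2 := hγ.2
    rw [alpha2, ← hS, h, Real.sInf_empty] at h2
    linarith [hγ.1]
  · obtain ⟨x, hx⟩ := h
    have hb : BddBelow S := ⟨0, fun y hy => hy.1.1.le⟩
    calc γ < alpha2 := hγ.2
      _ ≤ x := by rw [alpha2, ← hS]; exact csInf_le hb hx
      _ < 1 := hx.1.2

lemma no_double (hγ : γ ∈ Set.Ioo (1/2 : ℝ) alpha2) {x : ℝ} (hx0 : 0 < x) (hxγ : x ≤ γ)
    {b : ℕ → ℝ} (hb : memBI b) (hbx : seriesFun b x = 0) :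
    deriv (seriesFun b) x ≠ 0 := by
  intro hder
  set S := {x | x ∈ Set.Ioo (0:ℝ) 1 ∧
    ∃ a, memBI a ∧ seriesFun a x = 0 ∧ deriv (seriesFun a) x = 0} with hS
  have hmem : x ∈ S := ⟨⟨hx0, lt_of_le_of_lt hxγ (gamma_lt_one hγ)⟩, b, hb, hbx, hder⟩
  have hb' : BddBelow S := ⟨0, fun y hy => hy.1.1.le⟩
  have : alpha2 ≤ x := by rw [alpha2, ← hS]; exact csInf_le hb' hmem
  linarith [hγ.2]

/-- if `Pfun m t` is nonnegative on `[1/2,γ]` and vanishes at an interior point, we get a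
double zero of a `ℬ`-function at a point `≤ γ`, contradicting `γ < α₂`. -/
lemma interior_zero_contra (hγ : γ ∈ Set.Ioo (1/2 : ℝ) alpha2) {m : ℕ} (hm : 1 ≤ m)
    {t x : ℝ} (ht : t ∈ Set.Icc (-1:ℝ) 1) (hx : x ∈ Set.Ioo (1/2 : ℝ) γ)
    (hPx : Pfun m t x = 0) (hmin : ∀ y ∈ Set.Icc (1/2 : ℝ) γ, 0 ≤ Pfun m t y) : False := by
  have hγ1 : γ < 1 := gamma_lt_one hγ
  have hx01 : x ∈ Set.Ioo (-1:ℝ) 1 := ⟨by linarith [hx.1], by linarith [hx.2]⟩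
  have hloc : IsLocalMin (Pfun m t) x := by
    have hnb : Set.Ioo (1/2 : ℝ) γ ∈ 𝓝 x := isOpen_Ioo.mem_nhds hx
    filter_upwards [hnb] with y hy
    rw [hPx]
    exact hmin y ⟨hy.1.le, hy.2.le⟩
  have hder : deriv (Pfun m t) x = 0 := hloc.deriv_eq_zero
  rw [deriv_Pfun] at hder
  have hval : seriesFun (aseq m t) x = 0 := by
    rw [seriesFun_aseq_eq_ratio hm ht hx01, hPx, zero_div]
  have hder2 : deriv (seriesFun (aseq m t)) x = 0 := by
    rw [deriv_seriesFun_aseq hm ht hx01, hder, hPx]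
    ring
  exact no_double hγ (by linarith [hx.1]) hx.2.le (aseq_memBI ht) hval hder2

/-- Key induction: `Pfun k a` positive on `[1/2, γ)` if nonnegative at `γ`. -/
lemma key_induction (hγ : γ ∈ Set.Ioo (1/2 : ℝ) alpha2) :
    ∀ k, 1 ≤ k → ∀ a ∈ Set.Icc (-1:ℝ) 1, 0 ≤ Pfun k a γ →
      ∀ x ∈ Set.Ico (1/2 : ℝ) γ, 0 < Pfun k a x := by
  have hγ1 : γ < 1 := gamma_lt_one hγ
  have hγh : (1/2 : ℝ) < γ := hγ.1
  intro k hk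
  induction k, hk using Nat.le_induction with
  | base =>
    intro a ha _ x hx
    have h1 : Pfun 1 a x = 1 - (1-a) * (x * (1-x)) := by
      simp only [Pfun, pow_one]; ring
    rw [h1]
    nlinarith [sq_nonneg (1 - 2*x), ha.1, ha.2, hx.1, hx.2]
  | succ k hk1 ih =>
    intro a ha hPγ
    -- the set of admissible parameters
    set A := {t : ℝ | t ∈ Set.Icc a 1 ∧ ∀ x ∈ Set.Icc (1/2 : ℝ) γ, 0 ≤ Pfun (k+1) t x}
      with hA
    have hγIcc : γ ∈ Set.Icc (0:ℝ) 1 := ⟨by linarith, hγ1.le⟩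
    have hmemIcc : ∀ x ∈ Set.Icc (1/2:ℝ) γ, (0:ℝ) ≤ x ∧ x ≤ 1 :=
      fun x hx => ⟨by linarith [hx.1], by linarith [hx.2]⟩
    have haIcc : a ∈ Set.Icc (-1:ℝ) 1 := ha
    have h1A : (1:ℝ) ∈ A := by
      constructor
      · exact ⟨ha.2, le_refl 1⟩
      · intro x hx
        rcases eq_or_lt_of_le hx.2 with h | h
        · subst h
          calc (0:ℝ) ≤ Pfun (k+1) a x := hPγ
            _ ≤ Pfun (k+1) 1 x := Pfun_param_mono ha.2 (hmemIcc x hx).1 (hmemIcc x hx).2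
        · have h0 : 0 ≤ Pfun k (-1) γ := by
            rw [← Pfun_succ_one]
            calc (0:ℝ) ≤ Pfun (k+1) a γ := hPγ
              _ ≤ Pfun (k+1) 1 γ := Pfun_param_mono ha.2 hγIcc.1 hγIcc.2
          have := ih (-1) ⟨le_refl _, by norm_num⟩ h0 x ⟨hx.1, h⟩
          rw [← Pfun_succ_one] at this
          exact this.le
    have hAclosed : IsClosed A := by
      have : A = Set.Icc a 1 ∩ ⋂ x ∈ Set.Icc (1/2:ℝ) γ, {t : ℝ | 0 ≤ Pfun (k+1) t x} := by
        ext t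
        simp only [hA, Set.mem_setOf_eq, Set.mem_inter_iff, Set.mem_iInter]
      rw [this]
      apply isClosed_Icc.inter
      apply isClosed_biInter
      intro x hx
      apply isClosed_le continuous_const
      unfold Pfun; fun_prop
    have hAbdd : BddBelow A := ⟨a, fun t ht => ht.1.1⟩
    have hAne : A.Nonempty := ⟨1, h1A⟩
    set t₀ := sInf A with ht₀
    have ht₀A : t₀ ∈ A := hAclosed.csInf_mem hAne hAbdd
    have ht₀a : a ≤ t₀ := ht₀A.1.1
    have ht₀1 : t₀ ≤ 1 := ht₀A.1.2
    have ht₀Icc : t₀ ∈ Set.Icc (-1:ℝ) 1 := ⟨le_trans ha.1 ht₀a, ht₀1⟩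
    -- t₀ = a
    have hta : t₀ = a := by
      by_contra hne
      have hlt : a < t₀ := lt_of_le_of_ne ht₀a (Ne.symm hne)
      -- strict positivity of Pfun (k+1) t₀ on [1/2, γ]
      have hstrict : ∀ x ∈ Set.Icc (1/2:ℝ) γ, 0 < Pfun (k+1) t₀ x := by
        intro x hx
        rcases lt_or_eq_of_le (ht₀A.2 x hx) with h | h
        · exact h
        exfalso
        rcases eq_or_lt_of_le hx.1 with h12 | h12
        · rw [← h12] at h
          linarith [Pfun_half_pos (k := k+1) ht₀Icc]
        rcases eq_or_lt_of_le hx.2 with hxg | hxg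
        · -- x = γ : strict monotonicity in the parameter
          have hmono := Pfun_param_strictMono (k := k+1) hlt (by linarith : (0:ℝ) < x)
            (by rw [hxg]; exact hγ1)
          have h2 : 0 ≤ Pfun (k+1) a x := by rw [hxg]; exact hPγ
          linarith
        · exact interior_zero_contra hγ (by omega) ht₀Icc ⟨h12, hxg⟩ h.symm ht₀A.2
      -- minimum of Pfun (k+1) t₀ on the compact interval is positive
      obtain ⟨x₀, hx₀mem, hx₀min⟩ := isCompact_Icc.exists_isMinOn
        (Set.nonempty_Icc.mpr hγh.le) ((continuous_Pfun (k+1) t₀).continuousOn)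
      set μ := Pfun (k+1) t₀ x₀ with hμ
      have hμpos : 0 < μ := hstrict x₀ hx₀mem
      set ε := min μ (t₀ - a) with hε
      have hεpos : 0 < ε := lt_min hμpos (by linarith)
      have hεμ : ε ≤ μ := min_le_left _ _
      have hεta : ε ≤ t₀ - a := min_le_right _ _
      have ht'A : t₀ - ε ∈ A := by
        constructor
        · exact ⟨by linarith, by linarith⟩
        · intro x hx
          have hq : Pfun (k+1) (t₀ - ε) x = Pfun (k+1) t₀ x - ε * (x^(k+1) * (1-x)) := by
            simp only [Pfun, pow_succ]; ring
          have hb1 : x^(k+1) * (1-x) ≤ 1 := by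
            have h0 := (hmemIcc x hx).1
            have h1 := (hmemIcc x hx).2
            have : x^(k+1) ≤ 1 := pow_le_one₀ h0 h1
            nlinarith [pow_nonneg h0 (k+1)]
          have hb0 : 0 ≤ x^(k+1) * (1-x) := by
            have h0 := (hmemIcc x hx).1
            have h1 := (hmemIcc x hx).2
            have := pow_nonneg h0 (k+1)
            nlinarith
          have h3 : ε * (x^(k+1) * (1-x)) ≤ ε := mul_le_of_le_one_right hεpos.le hb1
          have h4 : μ ≤ Pfun (k+1) t₀ x := hx₀min hx
          rw [hq]
          linarith
      have : t₀ ≤ t₀ - ε := csInf_le hAbdd ht'A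
      linarith
    -- conclusion for a
    intro x hx
    have hge : 0 ≤ Pfun (k+1) a x := by
      have := ht₀A.2
      rw [hta] at this
      exact this x ⟨hx.1, hx.2.le⟩
    rcases lt_or_eq_of_le hge with h | h
    · exact h
    exfalso
    rcases eq_or_lt_of_le hx.1 with h12 | h12
    · rw [← h12] at h
      linarith [Pfun_half_pos (k := k+1) ha]
    · have hAmem : ∀ y ∈ Set.Icc (1/2:ℝ) γ, 0 ≤ Pfun (k+1) a y := by
        have := ht₀A.2; rw [hta] at this; exact this
      exact interior_zero_contra hγ (by omega) ha ⟨h12, hx.2⟩ h.symm hAmem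

end Gamma
end Stmt5Aux
namespace Stmt5Aux

lemma pow_fac (u v : ℝ) (m j : ℕ) :
    v^(m+j) * u^m - u^(m+j) * v^m = u^m * v^m * (v^j - u^j) := by
  rw [pow_add, pow_add]; ring

lemma cmp_tsum {k : ℕ} (hk : 1 ≤ k) {a : ℝ} (ha : a ∈ Set.Icc (-1:ℝ) 1)
    {b : ℕ → ℝ} (hb : memBI b) {u v : ℝ} (hu : 0 < u) (huv : u < v) (hv : v < 1) :
    (0 ≤ v^k * (seriesFun b u - seriesFun (aseq k a) u)
        - u^k * (seriesFun b v - seriesFun (aseq k a) v))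
    ∧ (seriesFun b u = seriesFun (aseq k a) u → seriesFun b v = seriesFun (aseq k a) v →
        b = aseq k a) := by
  have hv0 : 0 < v := lt_trans hu huv
  have hu1 : u < 1 := lt_trans huv hv
  have hau : |u| < 1 := abs_lt.mpr ⟨by linarith, hu1⟩
  have hav : |v| < 1 := abs_lt.mpr ⟨by linarith, hv⟩
  have hsbu : Summable (fun n => b n * u^n) := summable_coeff (memBI_abs hb) hau
  have hsbv : Summable (fun n => b n * v^n) := summable_coeff (memBI_abs hb) hav
  have hsau : Summable (fun n => aseq k a n * u^n) := summable_coeff (aseq_abs ha) hau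
  have hsav : Summable (fun n => aseq k a n * v^n) := summable_coeff (aseq_abs ha) hav
  set T : ℕ → ℝ := fun n => v^k * (b n * u^n) - v^k * (aseq k a n * u^n)
    - u^k * (b n * v^n) + u^k * (aseq k a n * v^n) with hT
  have hTfac : ∀ n, T n = (b n - aseq k a n) * (v^k * u^n - u^k * v^n) := by
    intro n; simp only [hT]; ring
  -- nonnegativity of each term
  have hTnn : ∀ n, 0 ≤ T n := by
    intro n
    rw [hTfac n]
    rcases Nat.lt_trichotomy n k with h | h | h
    · -- n < k : both factors nonneg
      have hfac : v^k * u^n - u^k * v^n = u^n * v^n * (v^(k-n) - u^(k-n)) := by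
        have h' := pow_fac u v n (k-n)
        rw [show n + (k-n) = k by omega] at h'
        linear_combination h'
      have hpow : u^(k-n) ≤ v^(k-n) := pow_le_pow_left₀ hu.le huv.le _
      have hfnn : 0 ≤ v^k * u^n - u^k * v^n := by
        rw [hfac]
        apply mul_nonneg (by positivity)
        linarith
      have hcnn : 0 ≤ b n - aseq k a n := by
        rcases Nat.eq_zero_or_pos n with h0 | h0
        · subst h0; rw [hb.1]; simp [aseq]
        · have hbn := (hb.2 n h0).1
          have hn0 : ¬ (n = 0) := by omega
          simp only [aseq, if_neg hn0, if_pos h]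
          linarith
      exact mul_nonneg hcnn hfnn
    · subst h
      have : v^n * u^n - u^n * v^n = 0 := by ring
      rw [this, mul_zero]
    · -- k < n : both factors nonpos
      have hfac : v^k * u^n - u^k * v^n = u^k * v^k * (u^(n-k) - v^(n-k)) := by
        have h' := pow_fac v u k (n-k)
        rw [show k + (n-k) = n by omega] at h'
        linear_combination h'
      have hpow : u^(n-k) ≤ v^(n-k) := pow_le_pow_left₀ hu.le huv.le _
      have hfnp : v^k * u^n - u^k * v^n ≤ 0 := by
        rw [hfac]
        apply mul_nonpos_of_nonneg_of_nonpos (by positivity)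
        linarith
      have hcnp : b n - aseq k a n ≤ 0 := by
        have hbn := (hb.2 n (by omega)).2
        have hn0 : ¬ (n = 0) := by omega
        have hn1 : ¬ (n < k) := by omega
        have hn2 : ¬ (n = k) := by omega
        simp only [aseq, if_neg hn0, if_neg hn1, if_neg hn2]
        linarith
      nlinarith [mul_nonneg (neg_nonneg.2 hcnp) (neg_nonneg.2 hfnp)]
  -- summability of T
  have hsT : Summable T := by
    apply Summable.add
    · exact ((hsbu.mul_left _).sub (hsau.mul_left _)).sub (hsbv.mul_left _)
    · exact hsav.mul_left _
  -- value of the tsum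
  have hTsum : ∑' n, T n = v^k * (seriesFun b u - seriesFun (aseq k a) u)
      - u^k * (seriesFun b v - seriesFun (aseq k a) v) := by
    have e1 : ∑' n, T n = v^k * (∑' n, b n * u^n) - v^k * (∑' n, aseq k a n * u^n)
        - u^k * (∑' n, b n * v^n) + u^k * (∑' n, aseq k a n * v^n) := by
      rw [hT]
      rw [Summable.tsum_add (((hsbu.mul_left _).sub (hsau.mul_left _)).sub (hsbv.mul_left _))
        (hsav.mul_left _)]
      rw [Summable.tsum_sub ((hsbu.mul_left _).sub (hsau.mul_left _)) (hsbv.mul_left _)]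
      rw [Summable.tsum_sub (hsbu.mul_left _) (hsau.mul_left _)]
      rw [tsum_mul_left, tsum_mul_left, tsum_mul_left, tsum_mul_left]
    rw [e1]
    simp only [seriesFun]
    ring
  constructor
  · rw [← hTsum]
    exact tsum_nonneg hTnn
  · intro h1 h2
    have hTzero : ∑' n, T n = 0 := by
      rw [hTsum, h1, h2]; ring
    have hTall : ∀ n, T n = 0 := by
      intro n
      have hle : T n ≤ ∑' m, T m := Summable.le_tsum hsT n (fun j _ => hTnn j)
      rw [hTzero] at hle
      linarith [hTnn n]
    funext n
    rcases Nat.lt_trichotomy n k with h | h | h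
    · -- factor is strictly positive
      have hfac : v^k * u^n - u^k * v^n = u^n * v^n * (v^(k-n) - u^(k-n)) := by
        have h' := pow_fac u v n (k-n)
        rw [show n + (k-n) = k by omega] at h'
        linear_combination h'
      have hpow : u^(k-n) < v^(k-n) := pow_lt_pow_left₀ huv hu.le (by omega)
      have hfpos : 0 < v^k * u^n - u^k * v^n := by
        rw [hfac]
        apply mul_pos (by positivity)
        linarith
      have := hTall n
      rw [hTfac n] at this
      have hzero : b n - aseq k a n = 0 := by
        rcases mul_eq_zero.mp this with h' | h'
        · exact h'
        · exfalso; rw [h'] at hfpos; exact lt_irrefl 0 hfpos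
      linarith [hzero]
    · -- n = k : use the value at u
      subst h
      have hothers : ∀ m, m ≠ n → b m * u^m - aseq n a m * u^m = 0 := by
        intro m hm
        have : b m = aseq n a m := by
          have hTm := hTall m
          rw [hTfac m] at hTm
          rcases Nat.lt_trichotomy m n with h' | h' | h'
          · have hfac : v^n * u^m - u^n * v^m = u^m * v^m * (v^(n-m) - u^(n-m)) := by
              have h3 := pow_fac u v m (n-m)
              rw [show m + (n-m) = n by omega] at h3
              linear_combination h3
            have hpow : u^(n-m) < v^(n-m) := pow_lt_pow_left₀ huv hu.le (by omega)
            have hfpos : 0 < v^n * u^m - u^n * v^m := by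
              rw [hfac]; apply mul_pos (by positivity); linarith
            rcases mul_eq_zero.mp hTm with h'' | h''
            · linarith
            · exfalso; rw [h''] at hfpos; exact lt_irrefl 0 hfpos
          · exact absurd h' hm
          · have hfac : v^n * u^m - u^n * v^m = u^n * v^n * (u^(m-n) - v^(m-n)) := by
              have h' := pow_fac v u n (m-n)
              rw [show n + (m-n) = m by omega] at h'
              linear_combination h'
            have hpow : u^(m-n) < v^(m-n) := pow_lt_pow_left₀ huv hu.le (by omega)
            have hfneg : v^n * u^m - u^n * v^m < 0 := by
              rw [hfac]
              apply mul_neg_of_pos_of_neg (by positivity)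
              linarith
            rcases mul_eq_zero.mp hTm with h'' | h''
            · linarith
            · exfalso; rw [h''] at hfneg; exact lt_irrefl 0 hfneg
        rw [this]; ring
      have hdiff : seriesFun b u - seriesFun (aseq n a) u
          = (b n - aseq n a n) * u^n := by
        rw [seriesFun, seriesFun, ← Summable.tsum_sub hsbu hsau]
        rw [tsum_eq_single n (fun m hm => hothers m hm)]
        ring
      rw [h1, sub_self] at hdiff
      have hun : (0:ℝ) < u^n := pow_pos hu n
      have : b n - aseq n a n = 0 := by
        rcases mul_eq_zero.mp hdiff.symm with h' | h'
        · exact h'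
        · exfalso; rw [h'] at hun; exact lt_irrefl 0 hun
      linarith [this]
    · -- k < n : factor strictly negative
      have hfac : v^k * u^n - u^k * v^n = u^k * v^k * (u^(n-k) - v^(n-k)) := by
        have h' := pow_fac v u k (n-k)
        rw [show k + (n-k) = n by omega] at h'
        linear_combination h'
      have hpow : u^(n-k) < v^(n-k) := pow_lt_pow_left₀ huv hu.le (by omega)
      have hfneg : v^k * u^n - u^k * v^n < 0 := by
        rw [hfac]
        apply mul_neg_of_pos_of_neg (by positivity)
        linarith
      have := hTall n
      rw [hTfac n] at this
      have hzero : b n - aseq k a n = 0 := by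
        rcases mul_eq_zero.mp this with h' | h'
        · exact h'
        · exfalso; rw [h'] at hfneg; exact lt_irrefl 0 hfneg
      linarith [hzero]

end Stmt5Aux

set_option maxHeartbeats 1000000 in
open Stmt5Aux in
/-- For `γ ∈ (1/2, α₂)` there is exactly one `f ∈ ℬ_{[-1,1]}` with
`f(γ) = f(φ(γ)) = 0`; moreover this `f` is a `(*)`-function `h_k^{(a)}` with `k ≥ 1`,
`a ∈ [-1,1]`, and `f'(γ) < 0`, `f'(φ(γ)) > 0`. -/
theorem stmt5 (γ : ℝ) (hγ : γ ∈ Set.Ioo (1 / 2 : ℝ) alpha2) :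
    ∃ a : ℕ → ℝ,
      (memBI a ∧ seriesFun a γ = 0 ∧ seriesFun a (phi γ) = 0) ∧
      (∀ a' : ℕ → ℝ, memBI a' → seriesFun a' γ = 0 → seriesFun a' (phi γ) = 0 → a' = a) ∧
      (∃ k : ℕ, 1 ≤ k ∧ ∃ c ∈ Set.Icc (-1 : ℝ) 1,
        Set.EqOn (seriesFun a) (hstar k c) (Set.Ioo (-1 : ℝ) 1)) ∧
      deriv (seriesFun a) γ < 0 ∧ 0 < deriv (seriesFun a) (phi γ) := by
  have hγh : (1/2 : ℝ) < γ := hγ.1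
  have hγ1 : γ < 1 := gamma_lt_one hγ
  have hγ0 : (0:ℝ) < γ := by linarith
  -- choice of k
  have hex : {n : ℕ | γ^(n+1) ≤ γ - 1/2}.Nonempty := by
    have ht := tendsto_pow_atTop_nhds_zero_of_lt_one hγ0.le hγ1
    have hev : ∀ᶠ n in Filter.atTop, γ^n < γ - 1/2 :=
      ht.eventually_lt_const (by linarith)
    obtain ⟨n, hn⟩ := hev.exists
    refine ⟨n, ?_⟩
    calc γ^(n+1) ≤ γ^n := pow_le_pow_of_le_one hγ0.le hγ1.le (by omega)
      _ ≤ γ - 1/2 := hn.le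
  set k := sInf {n : ℕ | γ^(n+1) ≤ γ - 1/2} with hkdef
  have hkmem : γ^(k+1) ≤ γ - 1/2 := Nat.sInf_mem hex
  have hk1 : 1 ≤ k := by
    by_contra h
    have hk0 : k = 0 := by omega
    rw [hk0, pow_one] at hkmem
    linarith
  have hklow : γ - 1/2 < γ^k := by
    have hlt : k - 1 < sInf {n : ℕ | γ^(n+1) ≤ γ - 1/2} := by omega
    have := Nat.notMem_of_lt_sInf hlt
    simp only [Set.mem_setOf_eq, not_le] at this
    rwa [show k - 1 + 1 = k by omega] at this
  -- choice of a
  have hden : (0:ℝ) < γ^k * (1 - γ) := mul_pos (pow_pos hγ0 k) (by linarith)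
  set a := (2*γ - 1 - γ^k - γ^(k+1)) / (γ^k * (1 - γ)) with hadef
  have hprod : a * (γ^k * (1 - γ)) = 2*γ - 1 - γ^k - γ^(k+1) :=
    div_mul_cancel₀ _ hden.ne'
  have haup : a < 1 := by
    rw [hadef, div_lt_one hden]
    nlinarith [hklow, pow_succ γ k]
  have halow : -1 ≤ a := by
    rw [hadef, le_div_iff₀ hden]
    nlinarith [hkmem, pow_succ γ k]
  have haIcc : a ∈ Set.Icc (-1:ℝ) 1 := ⟨halow, haup.le⟩
  have hPγ0 : Pfun k a γ = 0 := by
    simp only [Pfun]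
    linear_combination hprod
  -- positivity of P below γ
  have hPpos_lo : ∀ x, 0 ≤ x → x < γ → 0 < Pfun k a x := by
    intro x hx0 hxγ
    rcases lt_or_ge x (1/2) with h | h
    · exact Pfun_small_pos haIcc hx0 h
    · exact key_induction hγ k hk1 a haIcc (le_of_eq hPγ0.symm) x ⟨h, hxγ⟩
  have hconv := strictConvex_Pfun hk1 halow haup
  have hPdmono := strictMono_Pd hk1 halow haup
  have hγmem : γ ∈ Set.Ioo (-1:ℝ) 1 := ⟨by linarith, hγ1⟩
  have hgval : seriesFun (aseq k a) γ = 0 := by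
    rw [seriesFun_aseq_eq_ratio hk1 haIcc hγmem, hPγ0, zero_div]
  -- P'(γ) ≠ 0
  have hPdγ_ne : Pd k a γ ≠ 0 := by
    intro h0
    apply no_double hγ hγ0 (le_refl γ) (aseq_memBI haIcc) hgval
    rw [deriv_seriesFun_aseq hk1 haIcc hγmem, h0, hPγ0]
    ring
  -- P'(γ) < 0
  have hPdγ : Pd k a γ < 0 := by
    rcases lt_or_gt_of_ne hPdγ_ne with h | h
    · exact h
    exfalso
    have hc : ContinuousAt (Pd k a) γ := (continuous_Pd k a).continuousAt
    have hev : {y | 0 < Pd k a y} ∈ 𝓝 γ := hc (lt_mem_nhds h)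
    obtain ⟨ε, hεpos, hball⟩ := Metric.mem_nhds_iff.mp hev
    set x₁ := max (1/2 : ℝ) (γ - ε/2) with hx₁def
    have hx₁γ : x₁ < γ := by
      apply max_lt hγh
      linarith
    have hx₁0 : (0:ℝ) ≤ x₁ := le_trans (by norm_num) (le_max_left _ _)
    have hx₁ε : γ - x₁ ≤ ε/2 := by
      have := le_max_right (1/2 : ℝ) (γ - ε/2)
      linarith
    obtain ⟨c, hc1, hc2⟩ := exists_deriv_eq_slope (Pfun k a) hx₁γ
      (continuous_Pfun k a).continuousOn
      (fun y _ => (hasDerivAt_Pfun k a y).differentiableAt.differentiableWithinAt)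
    rw [deriv_Pfun] at hc2
    have hcball : c ∈ Metric.ball γ ε := by
      rw [Metric.mem_ball, Real.dist_eq, abs_lt]
      constructor <;> linarith [hc1.1, hc1.2, hx₁ε, hεpos]
    have hcpos : 0 < Pd k a c := hball hcball
    have hslope : (Pfun k a γ - Pfun k a x₁) / (γ - x₁) < 0 := by
      apply div_neg_of_neg_of_pos
      · have := hPpos_lo x₁ hx₁0 hx₁γ
        rw [hPγ0]; linarith
      · linarith
    rw [hc2] at hcpos
    linarith
  -- a point beyond γ where P is negative
  have hx₀ : ∃ x₀, γ < x₀ ∧ x₀ < 1 ∧ Pfun k a x₀ < 0 := by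
    have hder := hasDerivAt_Pfun k a γ
    rw [hasDerivAt_iff_tendsto_slope] at hder
    have h1 : Filter.Tendsto (slope (Pfun k a) γ) (𝓝[>] γ) (𝓝 (Pd k a γ)) :=
      hder.mono_left (nhdsWithin_mono γ (fun y hy => ne_of_gt hy))
    have h2 : ∀ᶠ y in 𝓝[>] γ, slope (Pfun k a) γ y < 0 :=
      h1.eventually_lt_const hPdγ
    have h3 : Set.Ioo γ 1 ∈ 𝓝[>] γ := Ioo_mem_nhdsGT_of_mem ⟨le_refl γ, hγ1⟩
    have h4 : ∀ᶠ y in 𝓝[>] γ, y ∈ Set.Ioo γ 1 := h3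
    obtain ⟨y, hy1, hy2⟩ := (h2.and h4).exists
    refine ⟨y, hy2.1, hy2.2, ?_⟩
    rw [slope_def_field] at hy1
    have hyγ : 0 < y - γ := by linarith [hy2.1]
    rw [div_neg_iff] at hy1
    rcases hy1 with ⟨h5, h6⟩ | ⟨h5, h6⟩
    · linarith
    · rw [hPγ0] at h5; linarith
  obtain ⟨x₀, hx₀γ, hx₀1, hPx₀⟩ := hx₀
  -- the second zero δ
  have hivt : (0:ℝ) ∈ Set.Ioo (Pfun k a x₀) (Pfun k a 1) := by
    rw [Pfun_one]; exact ⟨hPx₀, one_pos⟩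
  obtain ⟨δ, hδmem, hPδ⟩ := intermediate_value_Ioo hx₀1.le
    (continuous_Pfun k a).continuousOn hivt
  have hδγ : γ < δ := lt_trans hx₀γ hδmem.1
  have hδ1 : δ < 1 := hδmem.2
  have hδ0 : (0:ℝ) < δ := lt_trans hγ0 hδγ
  have hγI : γ ∈ Set.Icc (0:ℝ) 1 := ⟨hγ0.le, hγ1.le⟩
  have hδI : δ ∈ Set.Icc (0:ℝ) 1 := ⟨hδ0.le, hδ1.le⟩
  -- sign of P on (γ, δ)
  have hPneg : ∀ x, γ < x → x < δ → Pfun k a x < 0 := by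
    intro x h1 h2
    have hd : (0:ℝ) < δ - γ := by linarith
    set s := (δ - x)/(δ - γ) with hsdef
    set t := (x - γ)/(δ - γ) with htdef
    have hspos : 0 < s := div_pos (by linarith) hd
    have htpos : 0 < t := div_pos (by linarith) hd
    have hst : s + t = 1 := by rw [hsdef, htdef]; field_simp; ring
    have hcomb : s • γ + t • δ = x := by
      simp only [smul_eq_mul, hsdef, htdef]
      field_simp
      ring
    have h := hconv.2 hγI hδI (ne_of_lt hδγ) hspos htpos hst
    rw [hcomb, hPγ0, hPδ] at h
    simpa using h
  -- sign of P on (δ, 1]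
  have hPpos_hi : ∀ x, δ < x → x ≤ 1 → 0 < Pfun k a x := by
    intro x h1 h2
    have hd : (0:ℝ) < x - γ := by linarith
    set s := (x - δ)/(x - γ) with hsdef
    set t := (δ - γ)/(x - γ) with htdef
    have hspos : 0 < s := div_pos (by linarith) hd
    have htpos : 0 < t := div_pos (by linarith) hd
    have hst : s + t = 1 := by rw [hsdef, htdef]; field_simp; ring
    have hcomb : s • γ + t • x = δ := by
      simp only [smul_eq_mul, hsdef, htdef]
      field_simp
      ring
    have hxI : x ∈ Set.Icc (0:ℝ) 1 := ⟨by linarith, h2⟩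
    have h := hconv.2 hγI hxI (ne_of_lt (by linarith : γ < x)) hspos htpos hst
    rw [hcomb, hPδ, hPγ0] at h
    have : 0 < t * Pfun k a x := by simpa using h
    nlinarith
  -- P'(δ) > 0
  have hPdδ : 0 < Pd k a δ := by
    set x₁ := (γ + δ)/2 with hx₁def
    have hx₁a : γ < x₁ := by rw [hx₁def]; linarith
    have hx₁b : x₁ < δ := by rw [hx₁def]; linarith
    have hPx₁ : Pfun k a x₁ < 0 := hPneg x₁ hx₁a hx₁b
    obtain ⟨c, hc1, hc2⟩ := exists_deriv_eq_slope (Pfun k a) hx₁b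
      (continuous_Pfun k a).continuousOn
      (fun y _ => (hasDerivAt_Pfun k a y).differentiableAt.differentiableWithinAt)
    rw [deriv_Pfun] at hc2
    have hcpos : 0 < Pd k a c := by
      rw [hc2, hPδ]
      apply div_pos (by linarith) (by linarith)
    have hcI : c ∈ Set.Icc (0:ℝ) 1 := ⟨by linarith [hc1.1], by linarith [hc1.2]⟩
    have := hPdmono hcI hδI hc1.2
    linarith
  -- values and derivatives of g = seriesFun (aseq k a)
  have hδmem' : δ ∈ Set.Ioo (-1:ℝ) 1 := ⟨by linarith, hδ1⟩
  have hδval : seriesFun (aseq k a) δ = 0 := by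
    rw [seriesFun_aseq_eq_ratio hk1 haIcc hδmem', hPδ, zero_div]
  have hgderγ : deriv (seriesFun (aseq k a)) γ < 0 := by
    rw [deriv_seriesFun_aseq hk1 haIcc hγmem, hPγ0]
    apply div_neg_of_neg_of_pos
    · nlinarith
    · have h1γ : (0:ℝ) < 1 - γ := by linarith
      positivity
  have hgderδ : 0 < deriv (seriesFun (aseq k a)) δ := by
    rw [deriv_seriesFun_aseq hk1 haIcc hδmem', hPδ]
    apply div_pos
    · nlinarith
    · have h1δ : (0:ℝ) < 1 - δ := by linarith
      positivity
  -- uniqueness of zeros of g below δ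
  have hg_uniq : ∀ t, t < δ → ∀ x, 0 < x → x ≤ t → seriesFun (aseq k a) x = 0 → x = γ := by
    intro t ht x hx0 hxt hgx
    have hx1 : x < 1 := by linarith
    have hxmem : x ∈ Set.Ioo (-1:ℝ) 1 := ⟨by linarith, hx1⟩
    rw [seriesFun_aseq_eq_ratio hk1 haIcc hxmem] at hgx
    have h1x : (0:ℝ) < 1 - x := by linarith
    have hPx : Pfun k a x = 0 := by
      field_simp at hgx
      simpa using hgx
    rcases lt_trichotomy x γ with h | h | h
    · exfalso; have := hPpos_lo x hx0.le h; linarith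
    · exact h
    · exfalso; have := hPneg x h (by linarith); linarith
  -- ξ₂ of g
  have hxi : xi 2 (seriesFun (aseq k a)) = δ := by
    rw [xi]
    have hTδ : δ ∈ {t | t ∈ Set.Ioo (0:ℝ) 1 ∧ hasZeros (seriesFun (aseq k a)) 2 t} :=
      ⟨⟨hδ0, hδ1⟩, hasZeros_pair hγ0 hδγ hgval hδval⟩
    have hlb : ∀ y ∈ insert (1:ℝ) {t | t ∈ Set.Ioo (0:ℝ) 1 ∧
        hasZeros (seriesFun (aseq k a)) 2 t}, δ ≤ y := by
      intro y hy
      rcases Set.mem_insert_iff.mp hy with h | h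
      · rw [h]; exact hδ1.le
      · by_contra hlt
        push_neg at hlt
        have hder := hasZeros_two_aux h.2 (hg_uniq y hlt)
        linarith
    exact le_antisymm
      (csInf_le ⟨0, fun y hy => by
        rcases Set.mem_insert_iff.mp hy with h | h
        · rw [h]; norm_num
        · exact h.1.1.le⟩ (Set.mem_insert_of_mem _ hTδ))
      (le_csInf ⟨1, Set.mem_insert _ _⟩ hlb)
  -- φ(γ) = δ
  have hphimem : δ ∈ phiSet γ := ⟨aseq k a, aseq_memBI haIcc, hgval, hxi.symm⟩
  have hphilb : ∀ y ∈ phiSet γ, δ ≤ y := by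
    rintro y ⟨b, hb, hbγ, rfl⟩
    apply le_csInf ⟨1, Set.mem_insert _ _⟩
    intro z hz
    rcases Set.mem_insert_iff.mp hz with h | h
    · rw [h]; exact hδ1.le
    · by_contra hlt
      push_neg at hlt
      have huniq : ∀ x, 0 < x → x ≤ z → seriesFun b x = 0 → x = γ := by
        intro x hx0 hxz hbx
        have hxδ : x < δ := lt_of_le_of_lt hxz hlt
        have hx1 : x < 1 := by linarith
        have hxmem : x ∈ Set.Ioo (-1:ℝ) 1 := ⟨by linarith, hx1⟩
        rcases lt_trichotomy x γ with h' | h' | h'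
        · exfalso
          have hcmp := (cmp_tsum hk1 haIcc hb hx0 h' hγ1).1
          rw [hbγ, hgval, hbx] at hcmp
          have hgx : 0 < seriesFun (aseq k a) x := by
            rw [seriesFun_aseq_eq_ratio hk1 haIcc hxmem]
            exact div_pos (hPpos_lo x hx0.le h') (by linarith)
          have hγk : (0:ℝ) < γ^k := pow_pos hγ0 k
          nlinarith
        · exact h'
        · exfalso
          have hcmp := (cmp_tsum hk1 haIcc hb hγ0 h' hx1).1
          rw [hbγ, hgval, hbx] at hcmp
          have hgx : seriesFun (aseq k a) x < 0 := by
            rw [seriesFun_aseq_eq_ratio hk1 haIcc hxmem]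
            apply div_neg_of_neg_of_pos (hPneg x h' hxδ) (by linarith)
          have hγk : (0:ℝ) < γ^k := pow_pos hγ0 k
          nlinarith
      have hder := hasZeros_two_aux h.2 huniq
      exact no_double hγ hγ0 le_rfl hb hbγ hder
  have hphi : phi γ = δ :=
    le_antisymm (csInf_le ⟨δ, hphilb⟩ hphimem) (le_csInf ⟨δ, hphimem⟩ hphilb)
  -- assembly
  refine ⟨aseq k a, ⟨aseq_memBI haIcc, hgval, by rw [hphi]; exact hδval⟩, ?_, ?_, hgderγ, ?_⟩
  · intro b hb hbγ hbφ
    rw [hphi] at hbφ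
    exact (cmp_tsum hk1 haIcc hb hγ0 hδγ hδ1).2 (by rw [hbγ, hgval]) (by rw [hbφ, hδval])
  · exact ⟨k, hk1, a, haIcc, fun x hx => seriesFun_aseq_eq hk1 haIcc hx⟩
  · rw [hphi]; exact hgderδ
end
end

section
/- Let k ≥ 1 be an integer, u ∈ [−1,1], and h = h_k^{(u)}. Suppose γ, λ ∈ (0,1) with γ < λ and h(γ) = h(λ) = 0. Then every f ∈ ℬ_{[−1,1]} with f(γ) = 0 and f not identically equal to h satisfies f(x) < 0 for all x ∈ (γ, λ]. In particular, h is the unique element of ℬ_{[−1,1]} vanishing at both γ and λ. -/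
open Set Filter Topology

noncomputable section

namespace Stmt6Aux

/-- Coefficient sequence of the `(*)`-function `h_k^{(u)}`. -/
def hcoef (k : ℕ) (u : ℝ) : ℕ → ℝ := fun n =>
  if n = 0 then 1 else if n < k then -1 else if n = k then u else 1

lemma memBI_hcoef {k : ℕ} {u : ℝ} (hu : u ∈ Set.Icc (-1 : ℝ) 1) :
    memBI (hcoef k u) := by
  refine ⟨by simp [hcoef], fun n hn => ?_⟩
  unfold hcoef
  rcases hu with ⟨hu1, hu2⟩
  split_ifs <;> constructor <;> norm_num <;> linarith

lemma abs_le_one_of_memBI {a : ℕ → ℝ} (ha : memBI a) (n : ℕ) : |a n| ≤ 1 := by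
  rcases Nat.eq_zero_or_pos n with h | h
  · subst h; rw [ha.1]; norm_num
  · have := ha.2 n h
    rw [abs_le]; exact ⟨this.1, this.2⟩

lemma summable_aux {c : ℕ → ℝ} {C : ℝ} (hc : ∀ n, |c n| ≤ C) {x : ℝ} (hx : |x| < 1) :
    Summable (fun n => c n * x ^ n) := by
  apply Summable.of_norm_bounded
    (Summable.mul_left C (summable_geometric_of_lt_one (abs_nonneg x) hx))
  intro n
  rw [Real.norm_eq_abs, abs_mul, abs_pow]
  exact mul_le_mul_of_nonneg_right (hc n) (by positivity)

lemma geom_partial {k : ℕ} (hk : 1 ≤ k) (t : ℝ) :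
    (1 - t) * ∑ i ∈ Finset.Ico 1 k, t ^ i = t - t ^ k := by
  induction k, hk using Nat.le_induction with
  | base => simp
  | succ k hk ih =>
    rw [Finset.sum_Ico_succ_top hk, mul_add, ih]
    ring

/-- The series with coefficients `hcoef` equals `hstar` on `(-1,1)`. -/
lemma seriesFun_hcoef {k : ℕ} (hk : 1 ≤ k) {u : ℝ} (hu : u ∈ Set.Icc (-1 : ℝ) 1)
    {x : ℝ} (hx : x ∈ Set.Ioo (-1 : ℝ) 1) : seriesFun (hcoef k u) x = hstar k u x := by
  have hax : |x| < 1 := abs_lt.mpr ⟨hx.1, hx.2⟩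
  have hsum : Summable (fun n => hcoef k u n * x ^ n) :=
    summable_aux (abs_le_one_of_memBI (memBI_hcoef (k := k) hu)) hax
  have hsplit := Summable.sum_add_tsum_nat_add (k + 1) hsum
  have htail : ∀ n : ℕ, hcoef k u (n + (k + 1)) * x ^ (n + (k + 1)) = x ^ n * x ^ (k + 1) := by
    intro n
    have h1 : ¬ (n + (k + 1) = 0) := by omega
    have h2 : ¬ (n + (k + 1) < k) := by omega
    have h3 : ¬ (n + (k + 1) = k) := by omega
    simp only [hcoef, h1, h2, h3, if_false, one_mul]
    rw [pow_add]
  have htsum_tail : ∑' n : ℕ, hcoef k u (n + (k + 1)) * x ^ (n + (k + 1))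
      = x ^ (k + 1) / (1 - x) := by
    calc ∑' n : ℕ, hcoef k u (n + (k + 1)) * x ^ (n + (k + 1))
        = ∑' n : ℕ, x ^ n * x ^ (k + 1) := tsum_congr htail
      _ = (∑' n : ℕ, x ^ n) * x ^ (k + 1) := tsum_mul_right
      _ = (1 - x)⁻¹ * x ^ (k + 1) := by
          rw [tsum_geometric_of_norm_lt_one (by rwa [Real.norm_eq_abs])]
      _ = x ^ (k + 1) / (1 - x) := by rw [div_eq_mul_inv]; ring
  have hhead : ∑ i ∈ Finset.range (k + 1), hcoef k u i * x ^ i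
      = 1 - ∑ i ∈ Finset.Ico 1 k, x ^ i + u * x ^ k := by
    rw [Finset.sum_range_succ]
    rw [Finset.range_eq_Ico, Finset.sum_eq_sum_Ico_succ_bot (by omega : 0 < k)]
    have h0 : hcoef k u 0 * x ^ 0 = 1 := by simp [hcoef]
    have hkk : hcoef k u k * x ^ k = u * x ^ k := by
      have h1 : ¬ (k = 0) := by omega
      have h2 : ¬ (k < k) := by omega
      simp [hcoef, h1, h2]
    have hmid : ∑ i ∈ Finset.Ico (0 + 1) k, hcoef k u i * x ^ i
        = ∑ i ∈ Finset.Ico 1 k, -(x ^ i) := by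
      apply Finset.sum_congr rfl
      intro i hi
      rw [Finset.mem_Ico] at hi
      have h1 : ¬ (i = 0) := by omega
      simp [hcoef, h1, hi.2]
    rw [h0, hkk, hmid, Finset.sum_neg_distrib]
    ring
  have hfin : seriesFun (hcoef k u) x
      = (1 - ∑ i ∈ Finset.Ico 1 k, x ^ i + u * x ^ k) + x ^ (k + 1) / (1 - x) := by
    rw [seriesFun, ← hsplit, hhead, htsum_tail]
  rw [hfin, hstar]

/-- The polynomial `P(t) = (1-t) h_k^{(u)}(t)`. -/
def P (k : ℕ) (u : ℝ) (t : ℝ) : ℝ := 1 - 2 * t + (1 + u) * t ^ k + (1 - u) * t ^ (k + 1)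

lemma P_eq {k : ℕ} (hk : 1 ≤ k) (u : ℝ) {t : ℝ} (ht : t < 1) :
    (1 - t) * hstar k u t = P k u t := by
  have h1 : (1 : ℝ) - t ≠ 0 := by linarith
  have hg := geom_partial hk t
  rw [hstar, P]
  field_simp
  linear_combination (-1 : ℝ) * hg

lemma StrictConvexOn.smul' {s : Set ℝ} {f : ℝ → ℝ} {c : ℝ} (hc : 0 < c)
    (hf : StrictConvexOn ℝ s f) : StrictConvexOn ℝ s (fun x => c * f x) := by
  refine ⟨hf.1, fun x hx y hy hne a b ha hb hab => ?_⟩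
  have := hf.2 hx hy hne ha hb hab
  simp only [smul_eq_mul] at this ⊢
  nlinarith

lemma affine_convex : ConvexOn ℝ (Set.Ici (0:ℝ)) (fun t : ℝ => 1 - 2 * t) := by
  refine ⟨convex_Ici 0, fun x _ y _ a b ha hb hab => ?_⟩
  simp only [smul_eq_mul]
  nlinarith

lemma P_strictConvex {k : ℕ} (hk : 1 ≤ k) {u : ℝ} (hu : u ∈ Set.Icc (-1 : ℝ) 1)
    (h2 : 2 ≤ k ∨ u < 1) : StrictConvexOn ℝ (Set.Ici (0:ℝ)) (P k u) := by
  rcases hu with ⟨hu1, hu2⟩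
  have hQ : StrictConvexOn ℝ (Set.Ici (0:ℝ))
      (fun t : ℝ => (1 + u) * t ^ k + (1 - u) * t ^ (k + 1)) := by
    rcases lt_or_eq_of_le hu2 with hu2' | hu2'
    · have hs : StrictConvexOn ℝ (Set.Ici (0:ℝ)) (fun t : ℝ => (1 - u) * t ^ (k + 1)) := by
        exact StrictConvexOn.smul' (by linarith) (strictConvexOn_pow (n := k + 1) (by omega))
      have hc : ConvexOn ℝ (Set.Ici (0:ℝ)) (fun t : ℝ => (1 + u) * t ^ k) := by
        have := (convexOn_pow k).smul (c := 1 + u) (by linarith)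
        simpa [smul_eq_mul] using this
      exact hc.add_strictConvexOn hs
    · have hk2 : 2 ≤ k := by
        rcases h2 with h | h
        · exact h
        · exfalso; linarith
      have hs : StrictConvexOn ℝ (Set.Ici (0:ℝ)) (fun t : ℝ => (1 + u) * t ^ k) := by
        exact StrictConvexOn.smul' (by linarith) (strictConvexOn_pow (n := k) hk2)
      have hc : ConvexOn ℝ (Set.Ici (0:ℝ)) (fun t : ℝ => (1 - u) * t ^ (k + 1)) := by
        have := (convexOn_pow (k + 1)).smul (c := 1 - u) (by linarith)
        simpa [smul_eq_mul] using this
      exact hs.add_convexOn hc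
  have hP : StrictConvexOn ℝ (Set.Ici (0:ℝ))
      (fun t : ℝ => (1 - 2 * t) + ((1 + u) * t ^ k + (1 - u) * t ^ (k + 1))) :=
    affine_convex.add_strictConvexOn hQ
  convert hP using 2 with t
  rw [P]; ring

lemma hstar_neg {k : ℕ} (hk : 1 ≤ k) {u : ℝ} (hu : u ∈ Set.Icc (-1 : ℝ) 1)
    {γ lam : ℝ} (hγ : γ ∈ Set.Ioo (0:ℝ) 1) (hlam : lam ∈ Set.Ioo (0:ℝ) 1)
    (hlt : γ < lam) (h0 : hstar k u γ = 0) (h1 : hstar k u lam = 0)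
    {x : ℝ} (hx : x ∈ Set.Ioo γ lam) : hstar k u x < 0 := by
  have hx1 : x < 1 := lt_trans hx.2 hlam.2
  have hPγ : P k u γ = 0 := by rw [← P_eq hk u hγ.2, h0]; ring
  have hPlam : P k u lam = 0 := by rw [← P_eq hk u hlam.2, h1]; ring
  have hcase : 2 ≤ k ∨ u < 1 := by
    by_contra hc
    push_neg at hc
    obtain ⟨hk2, hu1⟩ := hc
    have hk1 : k = 1 := by omega
    have hu1' : u = 1 := le_antisymm hu.2 hu1
    rw [P, hk1, hu1'] at hPγ
    nlinarith [hPγ]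
  have hsc := P_strictConvex hk hu hcase
  set θ : ℝ := (lam - x) / (lam - γ) with hθ
  set τ : ℝ := (x - γ) / (lam - γ) with hτ
  have hden : (0:ℝ) < lam - γ := by linarith
  have hθpos : 0 < θ := by apply div_pos <;> linarith [hx.2]
  have hτpos : 0 < τ := by apply div_pos <;> linarith [hx.1]
  have hsum : θ + τ = 1 := by rw [hθ, hτ]; field_simp; ring
  have hcomb : θ • γ + τ • lam = x := by
    simp only [smul_eq_mul, hθ, hτ]
    field_simp
    ring
  have hne : γ ≠ lam := ne_of_lt hlt
  have hkey := hsc.2 (Set.mem_Ici.mpr hγ.1.le) (Set.mem_Ici.mpr hlam.1.le) hne hθpos hτpos hsum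
  rw [hcomb, hPγ, hPlam] at hkey
  simp only [smul_eq_mul, mul_zero, add_zero] at hkey
  have hcontr : (1 - x) * hstar k u x < 0 := by rw [P_eq hk u hx1]; exact hkey
  nlinarith [hcontr]

lemma term_nonneg {k : ℕ} {u : ℝ} {a : ℕ → ℝ} (ha : memBI a)
    {x y : ℝ} (hx : 0 < x) (hxy : x < y) (n : ℕ) :
    0 ≤ (a n - hcoef k u n) * x ^ n * y ^ k - (a n - hcoef k u n) * y ^ n * x ^ k := by
  set b := a n - hcoef k u n with hb
  have hy : 0 < y := lt_trans hx hxy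
  rcases Nat.lt_trichotomy n k with hnk | hnk | hnk
  · rcases Nat.eq_zero_or_pos n with h0 | h1
    · subst h0
      have hb0 : b = 0 := by simp [hb, hcoef, ha.1]
      simp [hb0]
    · have hbnn : 0 ≤ b := by
        have han := (ha.2 n h1).1
        have hcv : hcoef k u n = -1 := by
          have h1' : ¬ (n = 0) := by omega
          simp [hcoef, h1', hnk]
        rw [hb, hcv]; linarith
      have hxk : x ^ k = x ^ n * x ^ (k - n) := by rw [← pow_add]; congr 1; omega
      have hyk : y ^ k = y ^ n * y ^ (k - n) := by rw [← pow_add]; congr 1; omega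
      have hple : x ^ (k - n) ≤ y ^ (k - n) := pow_le_pow_left₀ hx.le hxy.le _
      rw [hxk, hyk]
      have key : b * x ^ n * (y ^ n * y ^ (k-n)) - b * y ^ n * (x ^ n * x ^ (k-n))
          = b * (x ^ n * y ^ n) * (y ^ (k-n) - x ^ (k-n)) := by ring
      rw [key]
      exact mul_nonneg (mul_nonneg hbnn (by positivity)) (by linarith)
  · subst hnk; ring_nf
    exact le_refl 0
  · have hbnp : b ≤ 0 := by
      have han := (ha.2 n (by omega)).2
      have hcv : hcoef k u n = 1 := by
        have h1' : ¬ (n = 0) := by omega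
        have h2' : ¬ (n < k) := by omega
        have h3' : ¬ (n = k) := by omega
        simp [hcoef, h1', h2', h3']
      rw [hb, hcv]; linarith
    have hxn : x ^ n = x ^ k * x ^ (n - k) := by rw [← pow_add]; congr 1; omega
    have hyn : y ^ n = y ^ k * y ^ (n - k) := by rw [← pow_add]; congr 1; omega
    have hple : x ^ (n - k) ≤ y ^ (n - k) := pow_le_pow_left₀ hx.le hxy.le _
    rw [hxn, hyn]
    have key : b * (x ^ k * x ^ (n-k)) * y ^ k - b * (y ^ k * y ^ (n-k)) * x ^ k
        = (-b) * (x ^ k * y ^ k) * (y ^ (n-k) - x ^ (n-k)) := by ring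
    rw [key]
    exact mul_nonneg (mul_nonneg (neg_nonneg.mpr hbnp) (by positivity)) (by linarith)

lemma term_eq_zero {k : ℕ} {u : ℝ} {a : ℕ → ℝ} (ha : memBI a)
    {x y : ℝ} (hx : 0 < x) (hxy : x < y) (n : ℕ) (hnk : n ≠ k)
    (hz : (a n - hcoef k u n) * x ^ n * y ^ k - (a n - hcoef k u n) * y ^ n * x ^ k = 0) :
    a n = hcoef k u n := by
  set b := a n - hcoef k u n with hb
  have hy : 0 < y := lt_trans hx hxy
  by_contra hne
  have hbne : b ≠ 0 := fun h => hne (by linarith [sub_eq_zero.mp h])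
  rcases Nat.lt_trichotomy n k with hlt' | heq | hgt
  · have h1 : 1 ≤ n := by
      by_contra h
      have : n = 0 := by omega
      subst this
      exact hbne (by simp [hb, hcoef, ha.1])
    have hbnn : 0 ≤ b := by
      have han := (ha.2 n h1).1
      have hcv : hcoef k u n = -1 := by
        have h1' : ¬ (n = 0) := by omega
        simp [hcoef, h1', hlt']
      rw [hb, hcv]; linarith
    have hbpos : 0 < b := lt_of_le_of_ne hbnn (Ne.symm hbne)
    have hxk : x ^ k = x ^ n * x ^ (k - n) := by rw [← pow_add]; congr 1; omega
    have hyk : y ^ k = y ^ n * y ^ (k - n) := by rw [← pow_add]; congr 1; omega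
    have hple : x ^ (k - n) < y ^ (k - n) :=
      pow_lt_pow_left₀ hxy hx.le (by omega)
    rw [hxk, hyk] at hz
    have key : b * x ^ n * (y ^ n * y ^ (k-n)) - b * y ^ n * (x ^ n * x ^ (k-n))
        = b * (x ^ n * y ^ n) * (y ^ (k-n) - x ^ (k-n)) := by ring
    rw [key] at hz
    have hp1 : (0:ℝ) < x ^ n * y ^ n := by positivity
    exact absurd hz (ne_of_gt (mul_pos (mul_pos hbpos hp1) (by linarith)))
  · exact hnk heq
  · have hbnp : b ≤ 0 := by
      have han := (ha.2 n (by omega)).2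
      have hcv : hcoef k u n = 1 := by
        have h1' : ¬ (n = 0) := by omega
        have h2' : ¬ (n < k) := by omega
        have h3' : ¬ (n = k) := by omega
        simp [hcoef, h1', h2', h3']
      rw [hb, hcv]; linarith
    have hbneg : b < 0 := lt_of_le_of_ne hbnp hbne
    have hxn : x ^ n = x ^ k * x ^ (n - k) := by rw [← pow_add]; congr 1; omega
    have hyn : y ^ n = y ^ k * y ^ (n - k) := by rw [← pow_add]; congr 1; omega
    have hple : x ^ (n - k) < y ^ (n - k) :=
      pow_lt_pow_left₀ hxy hx.le (by omega)
    rw [hxn, hyn] at hz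
    have key : b * (x ^ k * x ^ (n-k)) * y ^ k - b * (y ^ k * y ^ (n-k)) * x ^ k
        = (-b) * (x ^ k * y ^ k) * (y ^ (n-k) - x ^ (n-k)) := by ring
    rw [key] at hz
    have hp1 : (0:ℝ) < x ^ k * y ^ k := by positivity
    exact absurd hz (ne_of_gt (mul_pos (mul_pos (neg_pos.mpr hbneg) hp1) (by linarith)))

end Stmt6Aux

open Stmt6Aux in
/-- If `h = h_k^{(u)}` vanishes at `γ < λ` in `(0,1)`, then every
`f ∈ ℬ_{[-1,1]}` with `f(γ) = 0` not identically equal to `h` is negative on `(γ, λ]`;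
in particular `h` is the unique element of `ℬ_{[-1,1]}` vanishing at both `γ` and `λ`. -/
theorem stmt6 (k : ℕ) (hk : 1 ≤ k) (u : ℝ) (hu : u ∈ Set.Icc (-1 : ℝ) 1)
    (γ lam : ℝ) (hγ : γ ∈ Set.Ioo (0 : ℝ) 1) (hlam : lam ∈ Set.Ioo (0 : ℝ) 1)
    (hlt : γ < lam) (h0 : hstar k u γ = 0) (h1 : hstar k u lam = 0) :
    (∀ a : ℕ → ℝ, memBI a → seriesFun a γ = 0 →
      ¬ Set.EqOn (seriesFun a) (hstar k u) (Set.Ioo (-1 : ℝ) 1) →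
      ∀ x ∈ Set.Ioc γ lam, seriesFun a x < 0) ∧
    (∀ a : ℕ → ℝ, memBI a → seriesFun a γ = 0 → seriesFun a lam = 0 →
      Set.EqOn (seriesFun a) (hstar k u) (Set.Ioo (-1 : ℝ) 1)) := by
  have hγ1 : (0:ℝ) < γ := hγ.1
  have hγ2 : γ < 1 := hγ.2
  have hlam2 : lam < 1 := hlam.2
  -- core comparison claim
  have core : ∀ a : ℕ → ℝ, memBI a → seriesFun a γ = 0 →
      ∀ x : ℝ, γ < x → x ≤ lam →
        seriesFun a x ≤ hstar k u x ∧
        (seriesFun a x = hstar k u x → ∀ n, a n = hcoef k u n) := by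
    intro a ha haγ x hγx hxlam
    set c : ℕ → ℝ := fun n => a n - hcoef k u n with hc
    have hx0 : 0 < x := lt_trans hγ1 hγx
    have hx1 : x < 1 := lt_of_le_of_lt hxlam hlam2
    have haxγ : |γ| < 1 := by rw [abs_of_pos hγ1]; exact hγ2
    have haxx : |x| < 1 := by rw [abs_of_pos hx0]; exact hx1
    have habsc : ∀ n, |c n| ≤ 2 := by
      intro n
      have h1 := abs_le_one_of_memBI ha n
      have h2 := abs_le_one_of_memBI (memBI_hcoef (k := k) hu) n
      calc |c n| ≤ |a n| + |hcoef k u n| := abs_sub _ _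
        _ ≤ 2 := by linarith
    have hsaγ : Summable (fun n => a n * γ ^ n) :=
      summable_aux (abs_le_one_of_memBI ha) haxγ
    have hsax : Summable (fun n => a n * x ^ n) :=
      summable_aux (abs_le_one_of_memBI ha) haxx
    have hshγ : Summable (fun n => hcoef k u n * γ ^ n) :=
      summable_aux (abs_le_one_of_memBI (memBI_hcoef (k := k) hu)) haxγ
    have hshx : Summable (fun n => hcoef k u n * x ^ n) :=
      summable_aux (abs_le_one_of_memBI (memBI_hcoef (k := k) hu)) haxx
    have hscγ : Summable (fun n => c n * γ ^ n) := summable_aux habsc haxγ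
    have hscx : Summable (fun n => c n * x ^ n) := summable_aux habsc haxx
    have hγIoo : γ ∈ Set.Ioo (-1:ℝ) 1 := ⟨by linarith, hγ2⟩
    have hxIoo : x ∈ Set.Ioo (-1:ℝ) 1 := ⟨by linarith, hx1⟩
    have hgγ : ∑' n, c n * γ ^ n = 0 := by
      have : ∑' n, c n * γ ^ n
          = (∑' n, a n * γ ^ n) - ∑' n, hcoef k u n * γ ^ n := by
        rw [← Summable.tsum_sub hsaγ hshγ]
        apply tsum_congr; intro n; rw [hc]; ring
      rw [this]
      have h2 : (∑' n, hcoef k u n * γ ^ n) = hstar k u γ := seriesFun_hcoef hk hu hγIoo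
      have h3 : (∑' n, a n * γ ^ n) = seriesFun a γ := rfl
      rw [h2, h3, haγ, h0, sub_zero]
    have hgx : ∑' n, c n * x ^ n = seriesFun a x - hstar k u x := by
      have : ∑' n, c n * x ^ n
          = (∑' n, a n * x ^ n) - ∑' n, hcoef k u n * x ^ n := by
        rw [← Summable.tsum_sub hsax hshx]
        apply tsum_congr; intro n; rw [hc]; ring
      rw [this]
      have h2 : (∑' n, hcoef k u n * x ^ n) = hstar k u x := seriesFun_hcoef hk hu hxIoo
      have h3 : (∑' n, a n * x ^ n) = seriesFun a x := rfl
      rw [h2, h3]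
    -- the key nonnegative series
    set T : ℕ → ℝ := fun n => c n * γ ^ n * x ^ k - c n * x ^ n * γ ^ k with hT
    have hsT : Summable T := (hscγ.mul_right (x ^ k)).sub (hscx.mul_right (γ ^ k))
    have hTnonneg : ∀ n, 0 ≤ T n := fun n => term_nonneg ha hγ1 hγx n
    have hTsum : ∑' n, T n = - (seriesFun a x - hstar k u x) * γ ^ k := by
      have : ∑' n, T n
          = (∑' n, c n * γ ^ n) * x ^ k - (∑' n, c n * x ^ n) * γ ^ k := by
        rw [← tsum_mul_right, ← tsum_mul_right,
          ← Summable.tsum_sub (hscγ.mul_right (x ^ k)) (hscx.mul_right (γ ^ k))]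
      rw [this, hgγ, hgx]; ring
    have hTnn : 0 ≤ ∑' n, T n := tsum_nonneg hTnonneg
    have hle : seriesFun a x ≤ hstar k u x := by
      rw [hTsum] at hTnn
      have hγk : (0:ℝ) < γ ^ k := by positivity
      nlinarith
    refine ⟨hle, ?_⟩
    intro heq n
    have hTzero : ∑' n, T n = 0 := by rw [hTsum, heq]; ring
    have hTn0 : ∀ m, T m = 0 := by
      intro m
      have h1 : T m ≤ ∑' n, T n := Summable.le_tsum hsT m (fun j _ => hTnonneg j)
      have h2 := hTnonneg m
      rw [hTzero] at h1
      linarith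
    rcases eq_or_ne n k with hnk | hnk
    · -- use the vanishing at γ
      have hallz : ∀ m, m ≠ k → c m * γ ^ m = 0 := by
        intro m hm
        have hm' : a m = hcoef k u m := term_eq_zero ha hγ1 hγx m hm (hTn0 m)
        simp [hc, hm']
      have hsingle : ∑' m, c m * γ ^ m = c k * γ ^ k := tsum_eq_single k hallz
      rw [hgγ] at hsingle
      have hγk : (0:ℝ) < γ ^ k := by positivity
      have hck : c k = 0 := by
        rcases mul_eq_zero.mp hsingle.symm with h | h
        · exact h
        · exact absurd h (ne_of_gt hγk)
      have hck' : a k = hcoef k u k := sub_eq_zero.mp hck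
      rw [hnk]
      exact hck'
    · exact term_eq_zero ha hγ1 hγx n hnk (hTn0 n)
  -- part 1
  have part1 : ∀ a : ℕ → ℝ, memBI a → seriesFun a γ = 0 →
      ¬ Set.EqOn (seriesFun a) (hstar k u) (Set.Ioo (-1 : ℝ) 1) →
      ∀ x ∈ Set.Ioc γ lam, seriesFun a x < 0 := by
    intro a ha haγ hneq x hx
    obtain ⟨hle, heqc⟩ := core a ha haγ x hx.1 hx.2
    rcases lt_or_eq_of_le hx.2 with hxlt | hxeq
    · have := hstar_neg hk hu hγ hlam hlt h0 h1 ⟨hx.1, hxlt⟩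
      linarith
    · subst hxeq
      rw [h1] at hle
      rcases lt_or_eq_of_le hle with h | h
      · exact h
      · exfalso
        apply hneq
        intro t ht
        have hac : a = hcoef k u := funext (heqc (by rw [h, h1]))
        rw [hac]
        exact seriesFun_hcoef hk hu ht
  refine ⟨part1, ?_⟩
  intro a ha haγ halam
  by_contra hne
  have := part1 a ha haγ hne lam ⟨hlt, le_refl lam⟩
  rw [halam] at this
  exact lt_irrefl 0 this
end
end
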